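/- arXiv:0902.4036 — 5 statements merged into one kernel-verified Lean document; each statement's English description precedes it below -/
import Mathlib

section
/- (Symmetry of leakage.) For every embedding ψ of a primitive P (with arbitrary finite ancilla types 𝒜', ℬ'), the two sides of the leakage coincide: S(X;BB') − I(X;Y) = S(AA';Y) − I(X;Y), i.e. S(X;BB') = S(AA';Y). -/
open scoped BigOperators
open Matrix

noncomputable section

open scoped Classical in
/-- Base-2 von Neumann entropy of a matrix: minus the sum of `λ·log₂ λ` over the real
eigenvalues (with multiplicity) if the matrix is Hermitian, and `0` otherwise. -/
def vNE {n : Type*} [Fintype n] (ρ : Matrix n n ℂ) : ℝ :=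
  if h : ρ.IsHermitian then -∑ i, h.eigenvalues i * Real.logb 2 (h.eigenvalues i) else 0

/-- Shannon entropy (base 2), with the convention `0·log₂ 0 = 0`. -/
def shannon {α : Type*} [Fintype α] (p : α → ℝ) : ℝ :=
  -∑ a, p a * Real.logb 2 (p a)

/-- Marginal on the first component: `P_X`. -/
def margX {X Y : Type*} [Fintype Y] (P : X × Y → ℝ) (x : X) : ℝ := ∑ y, P (x, y)

/-- Marginal on the second component: `P_Y`. -/
def margY {X Y : Type*} [Fintype X] (P : X × Y → ℝ) (y : Y) : ℝ := ∑ x, P (x, y)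

/-- Mutual information `I(X;Y)` of a joint distribution `P` (base 2). -/
def mutualInfo {X Y : Type*} [Fintype X] [Fintype Y] (P : X × Y → ℝ) : ℝ :=
  ∑ x, ∑ y, P (x, y) * Real.logb 2 (P (x, y) / (margX P x * margY P y))

/-- The regular embedding `ψ_θ(x,y) = e^{iθ(x,y)}·√(P(x,y))`. -/
def regEmb {X Y : Type*} (P θ : X × Y → ℝ) (xy : X × Y) : ℂ :=
  Complex.exp (Complex.I * θ xy) * (Real.sqrt (P xy) : ℂ)

/-- Reduced density matrix `ρ_A(θ)` of the regular embedding `ψ_θ`. -/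
def rhoA {X Y : Type*} [Fintype Y] (P θ : X × Y → ℝ) : Matrix X X ℂ :=
  Matrix.of fun x x' => ∑ y, regEmb P θ (x, y) * star (regEmb P θ (x', y))

/-- Reduced density matrix `ρ_B(θ)` of the regular embedding `ψ_θ`. -/
def rhoB {X Y : Type*} [Fintype X] (P θ : X × Y → ℝ) : Matrix Y Y ℂ :=
  Matrix.of fun y y' => ∑ x, regEmb P θ (x, y) * star (regEmb P θ (x, y'))

/-- Leakage `Δ(ψ_θ) = S(ρ_B(θ)) − I(X;Y)` of a regular embedding. -/
def leakReg {X Y : Type*} [Fintype X] [Fintype Y] (P θ : X × Y → ℝ) : ℝ :=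
  vNE (rhoB P θ) - mutualInfo P

/-- Leakage `Δ_P` of a primitive: the infimum of the leakage over all phase functions. -/
def leakPrim {X Y : Type*} [Fintype X] [Fintype Y] (P : X × Y → ℝ) : ℝ :=
  ⨅ θ : X × Y → ℝ, leakReg P θ

section Embedding

variable {𝒳 𝒴 𝒜 ℬ : Type*} [Fintype 𝒳] [Fintype 𝒴] [Fintype 𝒜] [Fintype ℬ]

/-- Reduced state `ρ_{BB'}` of an embedding `ψ ∈ ℂ^{𝒳×𝒴×𝒜'×ℬ'}`. -/
def rhoBB' (ψ : 𝒳 → 𝒴 → 𝒜 → ℬ → ℂ) : Matrix (𝒴 × ℬ) (𝒴 × ℬ) ℂ :=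
  Matrix.of fun p q => ∑ x, ∑ a, ψ x p.1 a p.2 * star (ψ x q.1 a q.2)

open scoped Classical in
/-- cq-state `ρ_{X,BB'}`: block-diagonal over `x`. -/
def rhoXBB' (ψ : 𝒳 → 𝒴 → 𝒜 → ℬ → ℂ) : Matrix (𝒳 × 𝒴 × ℬ) (𝒳 × 𝒴 × ℬ) ℂ :=
  Matrix.of fun p q =>
    if p.1 = q.1 then ∑ a, ψ p.1 p.2.1 a p.2.2 * star (ψ p.1 q.2.1 a q.2.2) else 0

open scoped Classical in
/-- cq-state `ρ_{Y,B'}`: block-diagonal over `y`. -/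
def rhoYB' (ψ : 𝒳 → 𝒴 → 𝒜 → ℬ → ℂ) : Matrix (𝒴 × ℬ) (𝒴 × ℬ) ℂ :=
  Matrix.of fun p q =>
    if p.1 = q.1 then ∑ x, ∑ a, ψ x p.1 a p.2 * star (ψ x p.1 a q.2) else 0

open scoped Classical in
/-- ccq-state `ρ_{X,Y,B'}`: block-diagonal over `(x,y)`. -/
def rhoXYB' (ψ : 𝒳 → 𝒴 → 𝒜 → ℬ → ℂ) : Matrix (𝒳 × 𝒴 × ℬ) (𝒳 × 𝒴 × ℬ) ℂ :=
  Matrix.of fun p q =>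
    if p.1 = q.1 ∧ p.2.1 = q.2.1 then
      ∑ a, ψ p.1 p.2.1 a p.2.2 * star (ψ p.1 p.2.1 a q.2.2)
    else 0

/-- Reduced state `ρ_{AA'}`. -/
def rhoAA' (ψ : 𝒳 → 𝒴 → 𝒜 → ℬ → ℂ) : Matrix (𝒳 × 𝒜) (𝒳 × 𝒜) ℂ :=
  Matrix.of fun p q => ∑ y, ∑ b, ψ p.1 y p.2 b * star (ψ q.1 y q.2 b)

open scoped Classical in
/-- cq-state `ρ_{X,A'}`: block-diagonal over `x`. -/
def rhoXA' (ψ : 𝒳 → 𝒴 → 𝒜 → ℬ → ℂ) : Matrix (𝒳 × 𝒜) (𝒳 × 𝒜) ℂ :=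
  Matrix.of fun p q =>
    if p.1 = q.1 then ∑ y, ∑ b, ψ p.1 y p.2 b * star (ψ p.1 y q.2 b) else 0

open scoped Classical in
/-- state `ρ_{X,A',Y}`: block-diagonal over `(x,y)`. -/
def rhoXA'Y (ψ : 𝒳 → 𝒴 → 𝒜 → ℬ → ℂ) : Matrix (𝒳 × 𝒜 × 𝒴) (𝒳 × 𝒜 × 𝒴) ℂ :=
  Matrix.of fun p q =>
    if p.1 = q.1 ∧ p.2.2 = q.2.2 then
      ∑ b, ψ p.1 p.2.2 p.2.1 b * star (ψ p.1 p.2.2 q.2.1 b)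
    else 0

open scoped Classical in
/-- state `ρ_{AA',Y}`: block-diagonal over `y`. -/
def rhoAA'Y (ψ : 𝒳 → 𝒴 → 𝒜 → ℬ → ℂ) : Matrix (𝒳 × 𝒜 × 𝒴) (𝒳 × 𝒜 × 𝒴) ℂ :=
  Matrix.of fun p q =>
    if p.2.2 = q.2.2 then ∑ b, ψ p.1 p.2.2 p.2.1 b * star (ψ q.1 q.2.2 q.2.1 b) else 0

/-- Quantum mutual information `S(X;BB') = H(P_X) + S(ρ_{BB'}) − S(ρ_{X,BB'})`. -/
def SXBB' (P : 𝒳 × 𝒴 → ℝ) (ψ : 𝒳 → 𝒴 → 𝒜 → ℬ → ℂ) : ℝ :=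
  shannon (margX P) + vNE (rhoBB' ψ) - vNE (rhoXBB' ψ)

/-- Quantum mutual information `S(X;YB') = H(P_X) + S(ρ_{Y,B'}) − S(ρ_{X,Y,B'})`. -/
def SXYB' (P : 𝒳 × 𝒴 → ℝ) (ψ : 𝒳 → 𝒴 → 𝒜 → ℬ → ℂ) : ℝ :=
  shannon (margX P) + vNE (rhoYB' ψ) - vNE (rhoXYB' ψ)

/-- Quantum mutual information `S(XA';Y) = S(ρ_{X,A'}) + H(P_Y) − S(ρ_{X,A',Y})`. -/
def SXA'Y (P : 𝒳 × 𝒴 → ℝ) (ψ : 𝒳 → 𝒴 → 𝒜 → ℬ → ℂ) : ℝ :=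
  vNE (rhoXA' ψ) + shannon (margY P) - vNE (rhoXA'Y ψ)

/-- Quantum mutual information `S(AA';Y) = S(ρ_{AA'}) + H(P_Y) − S(ρ_{AA',Y})`. -/
def SAA'Y (P : 𝒳 × 𝒴 → ℝ) (ψ : 𝒳 → 𝒴 → 𝒜 → ℬ → ℂ) : ℝ :=
  vNE (rhoAA' ψ) + shannon (margY P) - vNE (rhoAA'Y ψ)

/-- `ψ` is an embedding of the primitive `P`: it reproduces `P` upon measurement of the
`𝒳,𝒴` registers in the computational basis, and satisfies the correctness conditions
`S(X;YB') = I(X;Y)` and `S(XA';Y) = I(X;Y)`. -/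
def IsEmbedding (P : 𝒳 × 𝒴 → ℝ) (ψ : 𝒳 → 𝒴 → 𝒜 → ℬ → ℂ) : Prop :=
  (∀ x y, ∑ a, ∑ b, ‖ψ x y a b‖ ^ 2 = P (x, y)) ∧
    SXYB' P ψ = mutualInfo P ∧ SXA'Y P ψ = mutualInfo P

end Embedding


section AuxLemmas
open Polynomial
open scoped Classical

variable {m n : Type*} [Fintype m] [Fintype n]

private lemma charmatrix_eq_smul (A : Matrix n n ℂ) :
    charmatrix A = (X : ℂ[X]) • (1 : Matrix n n ℂ[X]) - A.map ⇑(Polynomial.C : ℂ →+* ℂ[X]) := by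
  ext i j
  by_cases h : i = j <;>
    simp [h, charmatrix_apply, Matrix.smul_apply, Matrix.one_apply, Matrix.sub_apply,
      Matrix.map_apply, Matrix.diagonal_apply]

private lemma charpoly_mul_X_pow (A : Matrix m n ℂ) (B : Matrix n m ℂ) :
    (A * B).charpoly * X ^ (Fintype.card n) = (B * A).charpoly * X ^ (Fintype.card m) := by
  set Cm : ℂ →+* ℂ[X] := Polynomial.C
  have e1 :
      fromBlocks (1 : Matrix m m ℂ[X]) (A.map ⇑Cm) 0 1 *
        fromBlocks (charmatrix (A * B)) 0 (B.map ⇑Cm) ((X : ℂ[X]) • 1) =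
      fromBlocks ((X:ℂ[X]) • 1) ((X:ℂ[X]) • (A.map ⇑Cm)) (B.map ⇑Cm) ((X:ℂ[X]) • 1) := by
    rw [fromBlocks_multiply, charmatrix_eq_smul, ← Matrix.map_mul]
    simp [Matrix.mul_smul, sub_add_cancel, Cm]
  have e2 :
      fromBlocks ((X:ℂ[X]) • 1) 0 (B.map ⇑Cm) (1 : Matrix n n ℂ[X]) *
        fromBlocks 1 (A.map ⇑Cm) 0 (charmatrix (B * A)) =
      fromBlocks ((X:ℂ[X]) • 1) ((X:ℂ[X]) • (A.map ⇑Cm)) (B.map ⇑Cm) ((X:ℂ[X]) • 1) := by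
    rw [fromBlocks_multiply, charmatrix_eq_smul, ← Matrix.map_mul]
    simp [Matrix.smul_mul, add_sub_cancel, Cm]
  have := congrArg Matrix.det (e1.trans e2.symm)
  rw [Matrix.det_mul, Matrix.det_mul, Matrix.det_fromBlocks_zero₂₁,
    Matrix.det_fromBlocks_zero₁₂, Matrix.det_fromBlocks_zero₁₂,
    Matrix.det_fromBlocks_zero₂₁] at this
  simpa [Matrix.charpoly, Matrix.det_smul, mul_comm, mul_assoc, mul_left_comm] using this

private lemma charpoly_conj_unit (U A V : Matrix n n ℂ) (hUV : U * V = 1) :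
    (U * A * V).charpoly = A.charpoly := by
  have hm : charmatrix (U * A * V) =
      U.map ⇑(Polynomial.C : ℂ →+* ℂ[X]) * charmatrix A * V.map ⇑(Polynomial.C : ℂ →+* ℂ[X]) := by
    rw [charmatrix_eq_smul, charmatrix_eq_smul, Matrix.mul_sub, Matrix.sub_mul, Matrix.mul_smul,
      Matrix.mul_one, Matrix.smul_mul, ← Matrix.map_mul, ← Matrix.map_mul, ← Matrix.map_mul,
      hUV, Matrix.map_one _ (map_zero _) (map_one _)]
  have hdet : (U.map ⇑(Polynomial.C : ℂ →+* ℂ[X])).det *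
      (V.map ⇑(Polynomial.C : ℂ →+* ℂ[X])).det = 1 := by
    rw [← Matrix.det_mul, ← Matrix.map_mul, hUV, Matrix.map_one _ (map_zero _) (map_one _),
      Matrix.det_one]
  rw [Matrix.charpoly, Matrix.charpoly, hm, Matrix.det_mul, Matrix.det_mul]
  ring_nf
  rw [mul_comm, ← mul_assoc, mul_comm ((V.map _).det), hdet, one_mul]

private lemma charpoly_diagonal' (d : n → ℂ) :
    (Matrix.diagonal d).charpoly = ∏ i, (X - Polynomial.C (d i)) := by
  have : charmatrix (Matrix.diagonal d) = Matrix.diagonal (fun i => X - Polynomial.C (d i)) := by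
    ext i j
    by_cases h : i = j <;> simp [h, charmatrix_apply, Matrix.diagonal_apply]
  rw [Matrix.charpoly, this, Matrix.det_diagonal]

private lemma charpoly_hermitian (A : Matrix n n ℂ) (hA : A.IsHermitian) :
    A.charpoly = ∏ i, (X - Polynomial.C ((hA.eigenvalues i : ℝ) : ℂ)) := by
  conv_lhs => rw [hA.spectral_theorem, Unitary.conjStarAlgAut_apply]
  rw [charpoly_conj_unit _ _ _ (Matrix.mem_unitaryGroup_iff.mp (hA.eigenvectorUnitary).2),
    charpoly_diagonal']
  rfl

private lemma roots_charpoly_hermitian (A : Matrix n n ℂ) (hA : A.IsHermitian) :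
    A.charpoly.roots = Multiset.map (fun i => ((hA.eigenvalues i : ℝ) : ℂ)) Finset.univ.val := by
  rw [charpoly_hermitian A hA, Finset.prod_eq_multiset_prod]
  have : Multiset.map (fun i => X - Polynomial.C ((hA.eigenvalues i : ℝ) : ℂ)) Finset.univ.val
      = Multiset.map (fun a : ℂ => X - Polynomial.C a)
          (Multiset.map (fun i => ((hA.eigenvalues i : ℝ) : ℂ)) Finset.univ.val) := by
    rw [Multiset.map_map]; rfl
  rw [this, roots_multiset_prod_X_sub_C]

private lemma vNE_eq_roots_sum (A : Matrix n n ℂ) (hA : A.IsHermitian) :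
    vNE A = -(Multiset.map (fun z : ℂ => z.re * Real.logb 2 z.re) A.charpoly.roots).sum := by
  rw [vNE, dif_pos hA, roots_charpoly_hermitian A hA, Multiset.map_map]
  rw [Finset.sum_eq_multiset_sum]
  simp [Function.comp]

private lemma charpoly_transpose' (A : Matrix n n ℂ) : Aᵀ.charpoly = A.charpoly := by
  have : charmatrix Aᵀ = (charmatrix A)ᵀ := by
    ext i j
    by_cases h : i = j <;> simp [h, charmatrix_apply, Matrix.diagonal_apply, eq_comm]
  rw [Matrix.charpoly, this, Matrix.det_transpose, Matrix.charpoly]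

private lemma vNE_swap (K : Matrix m n ℂ) : vNE (K * Kᴴ) = vNE ((Kᴴ * K)ᵀ) := by
  have h1 : (K * Kᴴ).IsHermitian := isHermitian_mul_conjTranspose_self K
  have h2 : (Kᴴ * K).IsHermitian := by
    simpa using isHermitian_mul_conjTranspose_self Kᴴ
  have hr : (K * Kᴴ).charpoly.roots + Multiset.replicate (Fintype.card n) (0 : ℂ)
      = (Kᴴ * K).charpoly.roots + Multiset.replicate (Fintype.card m) (0 : ℂ) := by
    have hkey := charpoly_mul_X_pow K Kᴴ
    have := congrArg Polynomial.roots hkey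
    rwa [Polynomial.roots_mul (mul_ne_zero (Matrix.charpoly_monic _).ne_zero
        (pow_ne_zero _ Polynomial.X_ne_zero)),
      Polynomial.roots_mul (mul_ne_zero (Matrix.charpoly_monic _).ne_zero
        (pow_ne_zero _ Polynomial.X_ne_zero)),
      Polynomial.roots_pow, Polynomial.roots_pow, Polynomial.roots_X,
      Multiset.nsmul_singleton, Multiset.nsmul_singleton] at this
  have hsum := congrArg (fun s : Multiset ℂ =>
    (Multiset.map (fun z : ℂ => z.re * Real.logb 2 z.re) s).sum) hr
  simp only [Multiset.map_add, Multiset.sum_add, Multiset.map_replicate, Complex.zero_re,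
    zero_mul, Multiset.sum_replicate, smul_zero, add_zero] at hsum
  rw [vNE_eq_roots_sum _ h1, vNE_eq_roots_sum _ h2.transpose, charpoly_transpose', hsum]

end AuxLemmas

section RhoIdentities
open scoped Classical

variable {𝒳 𝒴 𝒜 ℬ : Type*} [Fintype 𝒳] [Fintype 𝒴] [Fintype 𝒜] [Fintype ℬ]
variable (ψ : 𝒳 → 𝒴 → 𝒜 → ℬ → ℂ)

private def K1 : Matrix (𝒴 × ℬ) (𝒳 × 𝒜) ℂ := Matrix.of fun p q => ψ q.1 p.1 q.2 p.2

private def K2 : Matrix (𝒳 × 𝒴 × ℬ) (𝒳 × 𝒜) ℂ :=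
  Matrix.of fun p q => if p.1 = q.1 then ψ p.1 p.2.1 q.2 p.2.2 else 0

private def K3 : Matrix (𝒳 × 𝒴 × ℬ) (𝒳 × 𝒜 × 𝒴) ℂ :=
  Matrix.of fun p q => if p.1 = q.1 ∧ p.2.1 = q.2.2 then ψ p.1 p.2.1 q.2.1 p.2.2 else 0

private def K4 : Matrix (𝒳 × 𝒜 × 𝒴) (𝒴 × ℬ) ℂ :=
  Matrix.of fun p q => if p.2.2 = q.1 then ψ p.1 p.2.2 p.2.1 q.2 else 0

private lemma hBB' : rhoBB' ψ = K1 ψ * (K1 ψ)ᴴ := by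
  ext ⟨y, b⟩ ⟨y', b'⟩
  simp [rhoBB', K1, Matrix.mul_apply, Matrix.conjTranspose_apply, Fintype.sum_prod_type]

private lemma hAA' : rhoAA' ψ = ((K1 ψ)ᴴ * K1 ψ)ᵀ := by
  ext ⟨x, a⟩ ⟨x', a'⟩
  simp [rhoAA', K1, Matrix.mul_apply, Matrix.conjTranspose_apply, Matrix.transpose_apply,
    Fintype.sum_prod_type, mul_comm]

set_option linter.unusedSectionVars false in
private lemma hXBB' : rhoXBB' ψ = K2 ψ * (K2 ψ)ᴴ := by
  ext ⟨x, y, b⟩ ⟨x', y', b'⟩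
  by_cases h : x = x' <;>
    simp [rhoXBB', K2, Matrix.mul_apply, Matrix.conjTranspose_apply, Fintype.sum_prod_type,
      apply_ite (star : ℂ → ℂ), ite_mul, mul_ite, h]

set_option linter.unusedSectionVars false in
private lemma hXA' : rhoXA' ψ = ((K2 ψ)ᴴ * K2 ψ)ᵀ := by
  ext ⟨x, a⟩ ⟨x', a'⟩
  by_cases h : x = x' <;>
    simp [rhoXA', K2, Matrix.mul_apply, Matrix.conjTranspose_apply, Matrix.transpose_apply,
      Fintype.sum_prod_type, apply_ite (star : ℂ → ℂ), ite_mul, mul_ite, h, mul_comm, eq_comm]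

set_option linter.unusedSectionVars false in
private lemma hXYB' : rhoXYB' ψ = K3 ψ * (K3 ψ)ᴴ := by
  ext ⟨x, y, b⟩ ⟨x', y', b'⟩
  by_cases h1 : x = x' <;> by_cases h2 : y = y' <;>
    simp [rhoXYB', K3, Matrix.mul_apply, Matrix.conjTranspose_apply, Fintype.sum_prod_type,
      apply_ite (star : ℂ → ℂ), ite_mul, mul_ite, ite_and, h1, h2]

set_option linter.unusedSectionVars false in
private lemma hXA'Y : rhoXA'Y ψ = ((K3 ψ)ᴴ * K3 ψ)ᵀ := by
  ext ⟨x, a, y⟩ ⟨x', a', y'⟩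
  by_cases h1 : x = x' <;> by_cases h2 : y = y' <;>
    simp [rhoXA'Y, K3, Matrix.mul_apply, Matrix.conjTranspose_apply, Matrix.transpose_apply,
      Fintype.sum_prod_type, apply_ite (star : ℂ → ℂ), ite_mul, mul_ite, ite_and, h1, h2,
      mul_comm, eq_comm]

set_option linter.unusedSectionVars false in
private lemma hAA'Y : rhoAA'Y ψ = K4 ψ * (K4 ψ)ᴴ := by
  ext ⟨x, a, y⟩ ⟨x', a', y'⟩
  by_cases h : y = y' <;>
    simp [rhoAA'Y, K4, Matrix.mul_apply, Matrix.conjTranspose_apply, Fintype.sum_prod_type,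
      apply_ite (star : ℂ → ℂ), ite_mul, mul_ite, h]

set_option linter.unusedSectionVars false in
private lemma hYB' : rhoYB' ψ = ((K4 ψ)ᴴ * K4 ψ)ᵀ := by
  ext ⟨y, b⟩ ⟨y', b'⟩
  by_cases h : y = y' <;>
    simp [rhoYB', K4, Matrix.mul_apply, Matrix.conjTranspose_apply, Matrix.transpose_apply,
      Fintype.sum_prod_type, apply_ite (star : ℂ → ℂ), ite_mul, mul_ite, h, mul_comm, eq_comm]


end RhoIdentities

/-- **Symmetry of leakage.** For every embedding `ψ` of a primitive `P`,
`S(X;BB') − I(X;Y) = S(AA';Y) − I(X;Y)`, i.e. `S(X;BB') = S(AA';Y)`. -/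
theorem leakage_symmetry
    {𝒳 𝒴 𝒜' ℬ' : Type*} [Fintype 𝒳] [Fintype 𝒴] [Fintype 𝒜'] [Fintype ℬ']
    [Nonempty 𝒳] [Nonempty 𝒴] [Nonempty 𝒜'] [Nonempty ℬ']
    (P : 𝒳 × 𝒴 → ℝ) (hP0 : ∀ xy, 0 ≤ P xy) (hP1 : ∑ xy, P xy = 1)
    (ψ : 𝒳 → 𝒴 → 𝒜' → ℬ' → ℂ) (hψ : IsEmbedding P ψ) :
    SXBB' P ψ = SAA'Y P ψ := by
  have E1 : vNE (rhoBB' ψ) = vNE (rhoAA' ψ) := by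
    rw [hBB', hAA']; exact vNE_swap _
  have E2 : vNE (rhoXBB' ψ) = vNE (rhoXA' ψ) := by
    rw [hXBB', hXA']; exact vNE_swap _
  have E3 : vNE (rhoXYB' ψ) = vNE (rhoXA'Y ψ) := by
    rw [hXYB', hXA'Y]; exact vNE_swap _
  have E4 : vNE (rhoAA'Y ψ) = vNE (rhoYB' ψ) := by
    rw [hAA'Y, hYB']; exact vNE_swap _
  have c1 := hψ.2.1
  have c2 := hψ.2.2
  unfold SXYB' at c1
  unfold SXA'Y at c2
  unfold SXBB' SAA'Y
  linarith
end
end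

section
/- If P is a non-trivial primitive, then its canonical embedding (the regular embedding with phase function θ ≡ 0) is non-trivial; that is, both quantum conditional entropies are strictly positive: S(X↘Y|B) = S(ρ_{KB}) − S(ρ_B) > 0 and S(Y↘X|A) = S(ρ_{LA}) − S(ρ_A) > 0. -/
open scoped BigOperators
open Matrix

noncomputable section

/-- `f_X(x) = P_{Y|X=x}`, the conditional distribution of `Y` given `X = x`. -/
def fX {X Y : Type*} [Fintype Y] (P : X × Y → ℝ) (x : X) : Y → ℝ :=
  fun y => P (x, y) / margX P x

/-- `f_Y(y) = P_{X|Y=y}`, the conditional distribution of `X` given `Y = y`. -/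
def fY {X Y : Type*} [Fintype X] (P : X × Y → ℝ) (y : Y) : X → ℝ :=
  fun x => P (x, y) / margY P y

open scoped Classical in
/-- Shannon entropy `H(P_{f_X(X),Y})` of the joint distribution of the pair `(f_X(X), Y)`. -/
def entDepJoint {X Y : Type*} [Fintype X] [Fintype Y] (P : X × Y → ℝ) : ℝ :=
  -∑ k ∈ Finset.image (fX P) Finset.univ, ∑ y,
      (∑ x ∈ Finset.univ.filter fun x => fX P x = k, P (x, y)) *
        Real.logb 2 (∑ x ∈ Finset.univ.filter fun x => fX P x = k, P (x, y))

/-- Conditional Shannon entropy `H(X↘Y|Y) = H(P_{f_X(X),Y}) − H(P_Y)`. -/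
def condEntDep {X Y : Type*} [Fintype X] [Fintype Y] (P : X × Y → ℝ) : ℝ :=
  entDepJoint P - shannon (margY P)

/-- Bob's reduced state `ρ_B = Σ_x P_X(x)·|φ_x⟩⟨φ_x|` of the canonical embedding,
where `φ_x(y) = √(P(x,y)/P_X(x))`. -/
def rhoBcan {𝒳 𝒴 : Type*} [Fintype 𝒳] [Fintype 𝒴] (P : 𝒳 × 𝒴 → ℝ) : Matrix 𝒴 𝒴 ℂ :=
  Matrix.of fun y y' =>
    ((∑ x, margX P x * (Real.sqrt (P (x, y) / margX P x) *
        Real.sqrt (P (x, y') / margX P x)) : ℝ) : ℂ)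

/-- Alice's reduced state `ρ_A = Σ_y P_Y(y)·|φ'_y⟩⟨φ'_y|` of the canonical embedding,
where `φ'_y(x) = √(P(x,y)/P_Y(y))`. -/
def rhoAcan {𝒳 𝒴 : Type*} [Fintype 𝒳] [Fintype 𝒴] (P : 𝒳 × 𝒴 → ℝ) : Matrix 𝒳 𝒳 ℂ :=
  Matrix.of fun x x' =>
    ((∑ y, margY P y * (Real.sqrt (P (x, y) / margY P y) *
        Real.sqrt (P (x', y) / margY P y)) : ℝ) : ℂ)

open scoped Classical in
/-- The cq-state `ρ_{KB}`: block-diagonal over the distinct values `k` of `f_X` on the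
support of `P_X`, with `k`-block `Σ_{x : f_X(x)=k} P_X(x)·|φ_x⟩⟨φ_x|`. -/
def rhoKB {𝒳 𝒴 : Type*} [Fintype 𝒳] [Fintype 𝒴] (P : 𝒳 × 𝒴 → ℝ) :
    Matrix (↥(Finset.image (fX P) (Finset.univ.filter fun x => 0 < margX P x)) × 𝒴)
           (↥(Finset.image (fX P) (Finset.univ.filter fun x => 0 < margX P x)) × 𝒴) ℂ :=
  Matrix.of fun p q =>
    if p.1 = q.1 then
      ((∑ x ∈ Finset.univ.filter fun x => 0 < margX P x ∧ fX P x = (p.1 : 𝒴 → ℝ),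
          margX P x * (Real.sqrt (P (x, p.2) / margX P x) *
            Real.sqrt (P (x, q.2) / margX P x)) : ℝ) : ℂ)
    else 0

open scoped Classical in
/-- The cq-state `ρ_{LA}`: block-diagonal over the distinct values `l` of `f_Y` on the
support of `P_Y`, with `l`-block `Σ_{y : f_Y(y)=l} P_Y(y)·|φ'_y⟩⟨φ'_y|`. -/
def rhoLA {𝒳 𝒴 : Type*} [Fintype 𝒳] [Fintype 𝒴] (P : 𝒳 × 𝒴 → ℝ) :
    Matrix (↥(Finset.image (fY P) (Finset.univ.filter fun y => 0 < margY P y)) × 𝒳)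
           (↥(Finset.image (fY P) (Finset.univ.filter fun y => 0 < margY P y)) × 𝒳) ℂ :=
  Matrix.of fun p q =>
    if p.1 = q.1 then
      ((∑ y ∈ Finset.univ.filter fun y => 0 < margY P y ∧ fY P y = (p.1 : 𝒳 → ℝ),
          margY P y * (Real.sqrt (P (p.2, y) / margY P y) *
            Real.sqrt (P (q.2, y) / margY P y)) : ℝ) : ℂ)
    else 0



section helpers
open Matrix Real Polynomial ComplexOrder
open scoped Classical

set_option maxHeartbeats 1000000
set_option synthInstance.maxHeartbeats 1000000

theorem charpoly_conj_aux {m R : Type*} [Fintype m] [DecidableEq m] [CommRing R]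
    (V W M : Matrix m m R) (hVW : V * W = 1) (hWV : W * V = 1) :
    (V * M * W).charpoly = M.charpoly := by
  have hm : ∀ A B : Matrix m m R, (C : R →+* R[X]).mapMatrix (A * B) =
      (C : R →+* R[X]).mapMatrix A * (C : R →+* R[X]).mapMatrix B := fun A B =>
    _root_.map_mul (C : R →+* R[X]).mapMatrix A B
  have h1 : charmatrix (V * M * W) =
      (C : R →+* R[X]).mapMatrix V * charmatrix M * (C : R →+* R[X]).mapMatrix W := by
    simp only [charmatrix, Matrix.mul_sub, Matrix.sub_mul, hm]
    congr 1
    have hX : (Matrix.scalar m (X : R[X])) = (X : R[X]) • (1 : Matrix m m R[X]) := by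
      rw [scalar_apply, Matrix.smul_one_eq_diagonal]
    rw [hX, Matrix.mul_smul, Matrix.smul_mul, Matrix.mul_one, ← hm, hVW, _root_.map_one (C.mapMatrix : Matrix m m R →+* Matrix m m R[X])]
  have h2 : det ((C : R →+* R[X]).mapMatrix V) * det ((C : R →+* R[X]).mapMatrix W) = 1 := by
    rw [← det_mul, ← hm, hVW, _root_.map_one (C.mapMatrix : Matrix m m R →+* Matrix m m R[X]), det_one]
  rw [Matrix.charpoly, Matrix.charpoly, h1, det_mul, det_mul]
  calc det ((C : R →+* R[X]).mapMatrix V) * (charmatrix M).det * det ((C : R →+* R[X]).mapMatrix W)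
      = (charmatrix M).det * (det ((C : R →+* R[X]).mapMatrix V) *
        det ((C : R →+* R[X]).mapMatrix W)) := by ring
    _ = (charmatrix M).det := by rw [h2, mul_one]

theorem charpoly_diagonal_aux {m R : Type*} [Fintype m] [DecidableEq m] [CommRing R]
    (d : m → R) : (diagonal d).charpoly = ∏ i, (X - C (d i)) := by
  have h : charmatrix (diagonal d) = diagonal fun i => X - C (d i) := by
    ext i j
    by_cases h : i = j
    · subst h; simp
    · simp [charmatrix_apply_ne _ _ _ h, diagonal_apply_ne _ h]
  rw [Matrix.charpoly, h, det_diagonal]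

theorem det_tsmul_sub_mul_comm {m k : Type*} [Fintype m] [Fintype k] [DecidableEq m]
    [DecidableEq k] {F : Type*} [Field F] (t : F) (ht : t ≠ 0)
    (C : Matrix m k F) (D : Matrix k m F) :
    t ^ (Fintype.card k) * det (t • (1 : Matrix m m F) - C * D) =
      t ^ (Fintype.card m) * det (t • (1 : Matrix k k F) - D * C) := by
  have h1 : t • (1 : Matrix m m F) - C * D = t • ((1 : Matrix m m F) - (t⁻¹ • C) * D) := by
    rw [smul_sub, Matrix.smul_mul, smul_smul, mul_inv_cancel₀ ht, one_smul]
  have h2 : t • (1 : Matrix k k F) - D * C = t • ((1 : Matrix k k F) - D * (t⁻¹ • C)) := by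
    rw [smul_sub, Matrix.mul_smul, smul_smul, mul_inv_cancel₀ ht, one_smul]
  rw [h1, h2, det_smul, det_smul, det_one_sub_mul_comm]
  ring

theorem ratfunc_charpoly_key {n : Type*} [Fintype n] [DecidableEq n] (M : Matrix n n ℂ) :
    algebraMap ℂ[X] (RatFunc ℂ) (M.charpoly) =
      det ((algebraMap ℂ[X] (RatFunc ℂ)) X • (1 : Matrix n n (RatFunc ℂ)) -
        (M.map fun c => algebraMap ℂ[X] (RatFunc ℂ) (C c))) := by
  rw [Matrix.charpoly, RingHom.map_det]
  congr 1
  ext i j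
  by_cases h : i = j
  · subst h
    simp [charmatrix_apply_eq, Matrix.sub_apply]
  · simp [charmatrix_apply_ne _ _ _ h, Matrix.sub_apply, Matrix.one_apply_ne h,
      Matrix.smul_apply, h]

theorem charpoly_mul_comm_rect {m k : Type u} [Fintype m] [Fintype k] [DecidableEq m]
    [DecidableEq k] (A : Matrix m k ℂ) (B : Matrix k m ℂ) :
    X ^ (Fintype.card k) * (A * B).charpoly = X ^ (Fintype.card m) * (B * A).charpoly := by
  set φ := algebraMap ℂ[X] (RatFunc ℂ) with hφ
  have hinj : Function.Injective φ := IsFractionRing.injective ℂ[X] (RatFunc ℂ)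
  have ht : φ X ≠ 0 := fun h => X_ne_zero (hinj (h.trans (map_zero φ).symm))
  apply hinj
  have k1 := ratfunc_charpoly_key (A * B)
  have k2 := ratfunc_charpoly_key (B * A)
  have hmap : ∀ {a b : Type u} [Fintype a] [Fintype b] (A₁ : Matrix a b ℂ) (B₁ : Matrix b a ℂ),
      ((A₁ * B₁).map fun c => φ (C c)) =
        (A₁.map fun c => φ (C c)) * (B₁.map fun c => φ (C c)) := by
    intro a b _ _ A₁ B₁
    exact Matrix.map_mul (f := (φ.comp (C : ℂ →+* ℂ[X])))
  rw [_root_.map_mul φ, _root_.map_mul φ, map_pow, map_pow, k1, k2, hmap, hmap]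
  exact det_tsmul_sub_mul_comm (φ X) ht _ _

theorem charpoly_herm {m : Type*} [Fintype m] (M : Matrix m m ℂ) (hM : M.IsHermitian) :
    M.charpoly = ∏ i, (X - C ((hM.eigenvalues i : ℂ))) := by
  have h2 := Matrix.mem_unitaryGroup_iff.mp (hM.eigenvectorUnitary).2
  have h3 := Matrix.mem_unitaryGroup_iff'.mp (hM.eigenvectorUnitary).2
  conv_lhs => rw [hM.spectral_theorem, Unitary.conjStarAlgAut_apply]
  rw [charpoly_conj_aux _ _ _ h2 h3, charpoly_diagonal_aux]
  rfl

theorem roots_charpoly_herm {m : Type*} [Fintype m] (M : Matrix m m ℂ) (hM : M.IsHermitian) :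
    M.charpoly.roots = Multiset.map (fun i => (hM.eigenvalues i : ℂ)) Finset.univ.val := by
  rw [charpoly_herm M hM]
  have : (∏ i, (X - C ((hM.eigenvalues i : ℂ)))) =
      (Multiset.map (fun a : ℂ => X - C a)
        (Multiset.map (fun i => (hM.eigenvalues i : ℂ)) Finset.univ.val)).prod := by
    rw [Multiset.map_map]; rfl
  rw [this, roots_multiset_prod_X_sub_C]

theorem sum_f_eig_mul_comm {n ι : Type u} [Fintype n] [Fintype ι]
    (A : Matrix n ι ℂ) (h1 : (A * Aᴴ).IsHermitian) (h2 : (Aᴴ * A).IsHermitian)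
    (f : ℝ → ℝ) (hf0 : f 0 = 0) :
    ∑ a, f (h1.eigenvalues a) = ∑ i, f (h2.eigenvalues i) := by
  have hcp := charpoly_mul_comm_rect A Aᴴ
  have hr : (X ^ (Fintype.card ι) * (A * Aᴴ).charpoly).roots
      = (X ^ (Fintype.card n) * (Aᴴ * A).charpoly).roots := by rw [hcp]
  rw [Polynomial.roots_mul (mul_ne_zero (pow_ne_zero _ X_ne_zero)
        (A * Aᴴ).charpoly_monic.ne_zero),
      Polynomial.roots_mul (mul_ne_zero (pow_ne_zero _ X_ne_zero)
        (Aᴴ * A).charpoly_monic.ne_zero),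
      Polynomial.roots_pow, Polynomial.roots_pow, Polynomial.roots_X,
      roots_charpoly_herm _ h1, roots_charpoly_herm _ h2] at hr
  have hsum := congrArg (fun s : Multiset ℂ => ((s.map fun z => f z.re)).sum) hr
  have hz : ∀ c : ℕ, (((c • ({0} : Multiset ℂ)).map fun z => f z.re)).sum = 0 := by
    intro c
    rw [Multiset.map_nsmul, Multiset.map_singleton, Multiset.sum_nsmul, Multiset.sum_singleton]
    simp [hf0]
  simp only [Multiset.map_add, Multiset.sum_add, hz, zero_add, Multiset.map_map,
    Function.comp] at hsum
  rw [show ∀ g : n → ℝ, ∑ i, g i = (Multiset.map g Finset.univ.val).sum from fun g => rfl,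
    show ∀ g : ι → ℝ, ∑ i, g i = (Multiset.map g Finset.univ.val).sum from fun g => rfl]
  simpa using hsum

theorem schur_jensen_strict {k : Type*} [Fintype k] [DecidableEq k]
    (G : Matrix k k ℂ) (hPSD : G.PosSemidef) (q : k → ℝ)
    (hdiag : ∀ i, G i i = (q i : ℂ))
    (hoff : ∃ i j, i ≠ j ∧ G i j ≠ 0) :
    ∑ j, Real.negMulLog (hPSD.1.eigenvalues j) < ∑ i, Real.negMulLog (q i) := by
  classical
  have hH : G.IsHermitian := hPSD.1
  set μ : k → ℝ := hH.eigenvalues with hμdef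
  set U : Matrix k k ℂ := (hH.eigenvectorUnitary : Matrix k k ℂ) with hUdef
  set D : k → k → ℝ := fun i j => Complex.normSq (U i j) with hDdef
  have hD0 : ∀ i j, 0 ≤ D i j := fun i j => Complex.normSq_nonneg _
  have hμ0 : ∀ j, 0 ≤ μ j := fun j => hPSD.eigenvalues_nonneg j
  -- row sums
  have hUU : U * star U = 1 := Matrix.mem_unitaryGroup_iff.mp hH.eigenvectorUnitary.2
  have hUU' : star U * U = 1 := Matrix.mem_unitaryGroup_iff'.mp hH.eigenvectorUnitary.2
  have hrow : ∀ i, ∑ j, D i j = 1 := by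
    intro i
    have := congrFun (congrFun hUU i) i
    rw [Matrix.mul_apply, Matrix.one_apply_eq] at this
    have h2 : ∑ j, ((D i j : ℝ) : ℂ) = 1 := by
      rw [← this]
      exact Finset.sum_congr rfl fun j _ => by
        rw [Matrix.star_apply, Complex.star_def]
        exact (Complex.mul_conj (U i j)).symm
    have h3 : (((∑ j, D i j : ℝ)) : ℂ) = ((1 : ℝ) : ℂ) := by push_cast; rw [h2]
    exact_mod_cast h3
  have hcol : ∀ j, ∑ i, D i j = 1 := by
    intro j
    have := congrFun (congrFun hUU' j) j
    rw [Matrix.mul_apply, Matrix.one_apply_eq] at this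
    have h2 : ∑ i, ((D i j : ℝ) : ℂ) = 1 := by
      rw [← this]
      exact Finset.sum_congr rfl fun i _ => by
        rw [Matrix.star_apply, Complex.star_def, mul_comm]
        exact (Complex.mul_conj (U i j)).symm
    have h3 : (((∑ i, D i j : ℝ)) : ℂ) = ((1 : ℝ) : ℂ) := by push_cast; rw [h2]
    exact_mod_cast h3
  -- q as mixture
  have hq : ∀ i, q i = ∑ j, D i j * μ j := by
    intro i
    have hsp := hH.spectral_theorem; rw [Unitary.conjStarAlgAut_apply] at hsp
    have hGi : G i i = ∑ j, (((D i j * μ j : ℝ)) : ℂ) := by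
      conv_lhs => rw [hsp]
      rw [Matrix.mul_apply]
      refine Finset.sum_congr rfl fun j _ => ?_
      rw [Matrix.mul_apply, Finset.sum_eq_single j]
      · rw [Matrix.diagonal_apply_eq, Matrix.star_apply, Function.comp_apply]
        have hc : U i j * star (U i j) = ((Complex.normSq (U i j) : ℝ) : ℂ) := by
          rw [Complex.star_def, Complex.mul_conj]
        rw [Complex.ofReal_mul, ← hc]
        simp only [← hμdef, ← hUdef]
        exact mul_right_comm _ _ _
      · intro b _ hb; rw [Matrix.diagonal_apply_ne _ hb]; ring
      · intro h; exact absurd (Finset.mem_univ j) h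
    have : ((q i : ℝ) : ℂ) = ((∑ j, D i j * μ j : ℝ) : ℂ) := by
      rw [← hdiag i, hGi]; push_cast; rfl
    exact_mod_cast this
  -- trace of G^2
  set d : Matrix k k ℂ := diagonal (RCLike.ofReal ∘ hH.eigenvalues) with hddef
  have hsp : G = U * d * star U := hH.spectral_theorem
  have hGG : G * G = U * (d * d) * star U := by
    rw [hsp]
    simp only [Matrix.mul_assoc]
    rw [show star U * (U * (d * star U)) = d * star U by
      rw [← Matrix.mul_assoc, hUU', Matrix.one_mul]]
  have htrdiag : (U * (d * d) * star U).trace = ∑ j, ((μ j : ℂ))^2 := by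
    rw [Matrix.mul_assoc, Matrix.trace_mul_comm, Matrix.mul_assoc, hUU',
      Matrix.mul_one, hddef, Matrix.diagonal_mul_diagonal, Matrix.trace_diagonal]
    exact Finset.sum_congr rfl fun j _ => by simp [← hμdef]; ring
  have htrsq : (G * G).trace = ∑ i, ∑ i', ((Complex.normSq (G i i') : ℝ) : ℂ) := by
    rw [Matrix.trace]
    refine Finset.sum_congr rfl fun i _ => ?_
    rw [Matrix.diag_apply, Matrix.mul_apply]
    refine Finset.sum_congr rfl fun i' _ => ?_
    rw [show G i' i = star (G i i') from (hH.apply i' i).symm, Complex.star_def,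
      Complex.mul_conj]
  have htr : ∑ j, (μ j) ^ 2 = ∑ i, ∑ i', Complex.normSq (G i i') := by
    have hA : ((∑ j, (μ j)^2 : ℝ) : ℂ) = (G * G).trace := by
      rw [hGG, htrdiag]
      push_cast
      rfl
    have hB : ((∑ i, ∑ i', Complex.normSq (G i i') : ℝ) : ℂ) = (G * G).trace := by
      rw [htrsq]
      push_cast
      rfl
    exact_mod_cast hA.trans hB.symm
  -- strict inequality of squares
  have hsq : ∑ i, (q i)^2 < ∑ j, (μ j)^2 := by
    obtain ⟨i₀, j₀, hne, hGne⟩ := hoff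
    have hdsq : ∀ i, (q i)^2 = Complex.normSq (G i i) := fun i => by
      rw [hdiag i, Complex.normSq_ofReal]; ring
    rw [htr]
    calc ∑ i, (q i)^2 = ∑ i, Complex.normSq (G i i) := Finset.sum_congr rfl fun i _ => hdsq i
      _ < ∑ i, ∑ i', Complex.normSq (G i i') := by
          refine Finset.sum_lt_sum (fun i _ => ?_) ⟨i₀, Finset.mem_univ i₀, ?_⟩
          · exact Finset.single_le_sum (f := fun i' => Complex.normSq (G i i'))
              (fun _ _ => Complex.normSq_nonneg _) (Finset.mem_univ i)
          · have hj₀ : j₀ ∈ Finset.univ.erase i₀ := Finset.mem_erase.mpr ⟨fun h => hne h.symm,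
              Finset.mem_univ _⟩
            have h1 : Complex.normSq (G i₀ j₀) ≤ ∑ i' ∈ Finset.univ.erase i₀,
                Complex.normSq (G i₀ i') :=
              Finset.single_le_sum (fun _ _ => Complex.normSq_nonneg _) hj₀
            have h2 : Complex.normSq (G i₀ i₀) + ∑ i' ∈ Finset.univ.erase i₀,
                Complex.normSq (G i₀ i') = ∑ i', Complex.normSq (G i₀ i') :=
              Finset.add_sum_erase _ (fun i' => Complex.normSq (G i₀ i')) (Finset.mem_univ i₀)
            have h3 : 0 < Complex.normSq (G i₀ j₀) := Complex.normSq_pos.mpr hGne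
            linarith
  -- Jensen rows
  have hmem : ∀ j ∈ Finset.univ, μ j ∈ Set.Ici (0:ℝ) := fun j _ => hμ0 j
  have hrowle : ∀ i, ∑ j, D i j * Real.negMulLog (μ j) ≤ Real.negMulLog (q i) := by
    intro i
    rw [hq i]
    have := Real.strictConcaveOn_negMulLog.concaveOn.le_map_sum
      (fun j _ => hD0 i j) (hrow i) hmem
    simpa [smul_eq_mul] using this
  have hcolsum : ∑ i, ∑ j, D i j * Real.negMulLog (μ j) = ∑ j, Real.negMulLog (μ j) := by
    rw [Finset.sum_comm]
    exact Finset.sum_congr rfl fun j _ => by rw [← Finset.sum_mul, hcol, one_mul]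
  by_contra hcon
  push_neg at hcon
  have htote : ∑ i, (∑ j, D i j * Real.negMulLog (μ j)) = ∑ i, Real.negMulLog (q i) := by
    have hle : ∑ i, (∑ j, D i j * Real.negMulLog (μ j)) ≤ ∑ i, Real.negMulLog (q i) :=
      Finset.sum_le_sum fun i _ => hrowle i
    have hge : ∑ i, Real.negMulLog (q i) ≤ ∑ i, (∑ j, D i j * Real.negMulLog (μ j)) := by
      rw [hcolsum]; exact hcon
    linarith
  have hpt : ∀ i, ∑ j, D i j * Real.negMulLog (μ j) = Real.negMulLog (q i) :=
    fun i => (Finset.sum_eq_sum_iff_of_le (fun i _ => hrowle i)).mp htote i (Finset.mem_univ i)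
  have hconst : ∀ i j, D i j ≠ 0 → μ j = q i := by
    intro i j hDij
    have heqJ : Real.negMulLog (∑ j, D i j • μ j) = ∑ j, D i j • Real.negMulLog (μ j) := by
      simp only [smul_eq_mul]
      rw [← hq i]
      exact (hpt i).symm
    have := (Real.strictConcaveOn_negMulLog.map_sum_eq_iff' (fun j _ => hD0 i j)
      (hrow i) hmem).mp heqJ j (Finset.mem_univ j) hDij
    rw [this]
    simp only [smul_eq_mul]
    exact (hq i).symm
  have hsq2 : ∀ i, (q i)^2 = ∑ j, D i j * (μ j)^2 := by
    intro i
    have h1 : ∑ j, D i j * (μ j)^2 = ∑ j, D i j * μ j * q i := by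
      refine Finset.sum_congr rfl fun j _ => ?_
      by_cases hDij : D i j = 0
      · rw [hDij]; ring
      · rw [hconst i j hDij]; ring
    rw [h1, ← Finset.sum_mul, ← hq i]
    ring
  have hfin : ∑ i, (q i)^2 = ∑ j, (μ j)^2 := by
    calc ∑ i, (q i)^2 = ∑ i, ∑ j, D i j * (μ j)^2 := Finset.sum_congr rfl fun i _ => hsq2 i
      _ = ∑ j, ∑ i, D i j * (μ j)^2 := Finset.sum_comm
      _ = ∑ j, (μ j)^2 := Finset.sum_congr rfl fun j _ => by
          rw [← Finset.sum_mul, hcol, one_mul]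
  exact absurd hfin (ne_of_lt hsq)

theorem vNE_eq {n : Type*} [Fintype n] (M : Matrix n n ℂ) (hM : M.IsHermitian) :
    vNE M = (∑ i, Real.negMulLog (hM.eigenvalues i)) / Real.log 2 := by
  rw [vNE, dif_pos hM, ← Finset.sum_neg_distrib, Finset.sum_div]
  refine Finset.sum_congr rfl fun i _ => ?_
  rw [Real.negMulLog, Real.logb]
  ring

theorem sum_f_eig_of_charpoly {m : Type*} [Fintype m]
    (M : Matrix m m ℂ) (hM : M.IsHermitian) (v : m → ℝ)
    (h : M.charpoly = ∏ i, (X - C ((v i : ℝ) : ℂ))) (f : ℝ → ℝ) :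
    ∑ i, f (hM.eigenvalues i) = ∑ i, f (v i) := by
  have hr : Multiset.map (fun i => ((hM.eigenvalues i : ℝ) : ℂ)) Finset.univ.val
      = Multiset.map (fun i => ((v i : ℝ) : ℂ)) Finset.univ.val := by
    rw [← roots_charpoly_herm M hM, h]
    have : (∏ i, (X - C ((v i : ℝ) : ℂ))) =
        (Multiset.map (fun a : ℂ => X - C a)
          (Multiset.map (fun i => ((v i : ℝ) : ℂ)) Finset.univ.val)).prod := by
      rw [Multiset.map_map]; rfl
    rw [this, roots_multiset_prod_X_sub_C]
  have hsum := congrArg (fun s : Multiset ℂ => ((s.map fun z => f z.re)).sum) hr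
  simp only [Multiset.map_map, Function.comp] at hsum
  rw [show ∀ g : m → ℝ, ∑ i, g i = (Multiset.map g Finset.univ.val).sum from fun g => rfl]
  rw [show ∀ g : m → ℝ, ∑ i, g i = (Multiset.map g Finset.univ.val).sum from fun g => rfl]
  simpa using hsum

theorem mix_eq_mul_conjT {n ι : Type u} [Fintype n] [Fintype ι] (q : ι → ℝ) (ψ : ι → n → ℝ) (hq0 : ∀ i, 0 ≤ q i) :
    (Matrix.of fun a b => ((∑ i, q i * (ψ i a * ψ i b) : ℝ) : ℂ))
      = (Matrix.of fun (a : n) (i : ι) => ((Real.sqrt (q i) * ψ i a : ℝ) : ℂ))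
        * (Matrix.of fun (a : n) (i : ι) => ((Real.sqrt (q i) * ψ i a : ℝ) : ℂ))ᴴ := by
  ext a b
  simp only [Matrix.mul_apply, Matrix.of_apply, Matrix.conjTranspose_apply, Complex.star_def,
    Complex.conj_ofReal, ← Complex.ofReal_mul, ← Complex.ofReal_sum]
  refine congrArg _ (Finset.sum_congr rfl fun i _ => ?_)
  conv_rhs => rw [show Real.sqrt (q i) * ψ i a * (Real.sqrt (q i) * ψ i b)
    = Real.sqrt (q i) * Real.sqrt (q i) * (ψ i a * ψ i b) from by ring,
    Real.mul_self_sqrt (hq0 i)]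

theorem gram_eq {n ι : Type u} [Fintype n] [Fintype ι] (q : ι → ℝ) (ψ : ι → n → ℝ) :
    (Matrix.of fun (a : n) (i : ι) => ((Real.sqrt (q i) * ψ i a : ℝ) : ℂ))ᴴ
        * (Matrix.of fun (a : n) (i : ι) => ((Real.sqrt (q i) * ψ i a : ℝ) : ℂ))
      = Matrix.of fun i j =>
          ((Real.sqrt (q i) * Real.sqrt (q j) * ∑ a, ψ i a * ψ j a : ℝ) : ℂ) := by
  ext i j
  simp only [Matrix.mul_apply, Matrix.of_apply, Matrix.conjTranspose_apply, Complex.star_def,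
    Complex.conj_ofReal, ← Complex.ofReal_mul, ← Complex.ofReal_sum, Finset.mul_sum]
  exact congrArg _ (Finset.sum_congr rfl fun a _ => by ring)

theorem core_strict {n ι : Type u} [Fintype n] [Fintype ι] (q : ι → ℝ) (ψ : ι → n → ℝ) (hq0 : ∀ i, 0 ≤ q i) (hψb : ∀ i, ∑ a, (ψ i a)^2 = 1)
    (hover : ∃ i j, i ≠ j ∧ 0 < q i ∧ 0 < q j ∧ 0 < ∑ a, ψ i a * ψ j a) :
    vNE (Matrix.of fun a b => ((∑ i, q i * (ψ i a * ψ i b) : ℝ) : ℂ))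
      < -∑ i, q i * Real.logb 2 (q i) := by
  set A : Matrix n ι ℂ :=
    Matrix.of fun (a : n) (i : ι) => ((Real.sqrt (q i) * ψ i a : ℝ) : ℂ) with hA
  rw [mix_eq_mul_conjT q ψ hq0]
  have h1 : (A * Aᴴ).IsHermitian := Matrix.isHermitian_mul_conjTranspose_self A
  have h2 : (Aᴴ * A).IsHermitian := Matrix.isHermitian_conjTranspose_mul_self A
  have hPSD : (Aᴴ * A).PosSemidef := Matrix.posSemidef_conjTranspose_mul_self A
  rw [vNE_eq _ h1]
  have hstep1 : ∑ a, Real.negMulLog (h1.eigenvalues a)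
      = ∑ i, Real.negMulLog (h2.eigenvalues i) :=
    sum_f_eig_mul_comm A h1 h2 Real.negMulLog Real.negMulLog_zero
  have hdiag : ∀ i, (Aᴴ * A) i i = ((q i : ℝ) : ℂ) := by
    intro i
    have := congrFun (congrFun (gram_eq q ψ) i) i
    rw [this, Matrix.of_apply]
    congr 1
    rw [Real.mul_self_sqrt (hq0 i)]
    have : ∑ a, ψ i a * ψ i a = ∑ a, (ψ i a)^2 := Finset.sum_congr rfl fun a _ => (sq _).symm
    rw [this, hψb i, mul_one]
  have hoff : ∃ i j, i ≠ j ∧ (Aᴴ * A) i j ≠ 0 := by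
    obtain ⟨i, j, hij, hqi, hqj, hpos⟩ := hover
    refine ⟨i, j, hij, ?_⟩
    have := congrFun (congrFun (gram_eq q ψ) i) j
    rw [this, Matrix.of_apply]
    have hgt : 0 < Real.sqrt (q i) * Real.sqrt (q j) * ∑ a, ψ i a * ψ j a :=
      mul_pos (mul_pos (Real.sqrt_pos.mpr hqi) (Real.sqrt_pos.mpr hqj)) hpos
    exact Complex.ofReal_ne_zero.mpr (ne_of_gt hgt)
  have hmain : ∑ i, Real.negMulLog (hPSD.1.eigenvalues i) < ∑ i, Real.negMulLog (q i) :=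
    schur_jensen_strict (Aᴴ * A) hPSD q hdiag hoff
  have hRHS : -∑ i, q i * Real.logb 2 (q i) = (∑ i, Real.negMulLog (q i)) / Real.log 2 := by
    rw [← Finset.sum_neg_distrib, Finset.sum_div]
    refine Finset.sum_congr rfl fun i _ => ?_
    rw [Real.negMulLog, Real.logb]
    ring
  rw [hstep1, hRHS]
  have hlog2 : (0:ℝ) < Real.log 2 := Real.log_pos (by norm_num)
  exact div_lt_div_of_pos_right (by exact hmain) hlog2

theorem core_ortho {n ι : Type u} [Fintype n] [Fintype ι] (q : ι → ℝ) (ψ : ι → n → ℝ) (hq0 : ∀ i, 0 ≤ q i)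
    (hnorm : ∀ i, ∑ a, ψ i a * ψ i a = 1)
    (hog : ∀ i j, i ≠ j → ∑ a, ψ i a * ψ j a = 0) :
    vNE (Matrix.of fun a b => ((∑ i, q i * (ψ i a * ψ i b) : ℝ) : ℂ))
      = -∑ i, q i * Real.logb 2 (q i) := by
  set A : Matrix n ι ℂ :=
    Matrix.of fun (a : n) (i : ι) => ((Real.sqrt (q i) * ψ i a : ℝ) : ℂ) with hA
  rw [mix_eq_mul_conjT q ψ hq0]
  have h1 : (A * Aᴴ).IsHermitian := Matrix.isHermitian_mul_conjTranspose_self A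
  have h2 : (Aᴴ * A).IsHermitian := Matrix.isHermitian_conjTranspose_mul_self A
  rw [vNE_eq _ h1]
  have hstep1 : ∑ a, Real.negMulLog (h1.eigenvalues a)
      = ∑ i, Real.negMulLog (h2.eigenvalues i) :=
    sum_f_eig_mul_comm A h1 h2 Real.negMulLog Real.negMulLog_zero
  have hdg : Aᴴ * A = Matrix.diagonal (fun i => ((q i : ℝ) : ℂ)) := by
    rw [gram_eq q ψ]
    ext i j
    rw [Matrix.of_apply]
    by_cases h : i = j
    · subst h
      rw [Matrix.diagonal_apply_eq, hnorm i]
      simp [Real.mul_self_sqrt (hq0 i)]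
    · rw [Matrix.diagonal_apply_ne _ h, hog i j h]
      simp
  have hch : (Aᴴ * A).charpoly = ∏ i, (X - C ((q i : ℝ) : ℂ)) := by
    rw [hdg, charpoly_diagonal_aux]
  have hstep2 : ∑ i, Real.negMulLog (h2.eigenvalues i) = ∑ i, Real.negMulLog (q i) :=
    sum_f_eig_of_charpoly (Aᴴ * A) h2 q hch Real.negMulLog
  rw [hstep1, hstep2, ← Finset.sum_neg_distrib, Finset.sum_div]
  refine Finset.sum_congr rfl fun i _ => ?_
  rw [Real.negMulLog, Real.logb]
  ring


theorem overlap_of_condEntDep {𝒳 𝒴 : Type*} [Fintype 𝒳] [Fintype 𝒴] (P : 𝒳 × 𝒴 → ℝ)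
    (hP0 : ∀ xy, 0 ≤ P xy) (hnt : condEntDep P ≠ 0) :
    ∃ x x' y, 0 < P (x, y) ∧ 0 < P (x', y) ∧ fX P x ≠ fX P x' := by
  by_contra hno
  push_neg at hno
  apply hnt
  rw [condEntDep, entDepJoint, shannon, Finset.sum_comm, sub_eq_zero, neg_inj]
  refine Finset.sum_congr rfl fun y _ => ?_
  by_cases hy : ∃ x, 0 < P (x, y)
  · obtain ⟨x₀, hx₀⟩ := hy
    have hk₀ : fX P x₀ ∈ Finset.image (fX P) Finset.univ :=
      Finset.mem_image_of_mem _ (Finset.mem_univ x₀)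
    have hzero : ∀ k ∈ Finset.image (fX P) Finset.univ, k ≠ fX P x₀ →
        (∑ x ∈ Finset.univ.filter fun x => fX P x = k, P (x, y)) = 0 := by
      intro k _ hk
      refine Finset.sum_eq_zero fun x hx => ?_
      by_contra hne
      have hpos : 0 < P (x, y) := lt_of_le_of_ne (hP0 _) (Ne.symm hne)
      exact hk (((Finset.mem_filter.mp hx).2).symm.trans (hno x x₀ y hpos hx₀))
    have hmarg : (∑ x ∈ Finset.univ.filter fun x => fX P x = fX P x₀, P (x, y))
        = margY P y := by
      rw [margY]
      refine Finset.sum_subset (Finset.filter_subset _ _) fun x _ hx => ?_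
      by_contra hne
      have hpos : 0 < P (x, y) := lt_of_le_of_ne (hP0 _) (Ne.symm hne)
      exact hx (Finset.mem_filter.mpr ⟨Finset.mem_univ x, hno x x₀ y hpos hx₀⟩)
    rw [Finset.sum_eq_single (fX P x₀)]
    · rw [hmarg]
    · intro k hkmem hk
      rw [hzero k hkmem hk, zero_mul]
    · intro hcon
      exact absurd hk₀ hcon
  · push_neg at hy
    have hPy : ∀ x, P (x, y) = 0 := fun x => le_antisymm (hy x) (hP0 _)
    have hmy : margY P y = 0 := by
      rw [margY]
      exact Finset.sum_eq_zero fun x _ => hPy x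
    rw [hmy]
    rw [Finset.sum_eq_zero, zero_mul]
    intro k _
    rw [Finset.sum_eq_zero fun x _ => hPy x, zero_mul]

theorem overlap_swap {𝒳 𝒴 : Type*} [Fintype 𝒳] [Fintype 𝒴] (P : 𝒳 × 𝒴 → ℝ)
    (hP0 : ∀ xy, 0 ≤ P xy)
    (hov : ∃ x x' y, 0 < P (x, y) ∧ 0 < P (x', y) ∧ fX P x ≠ fX P x') :
    ∃ y y' x, 0 < P (x, y) ∧ 0 < P (x, y') ∧ fY P y ≠ fY P y' := by
  by_contra hno
  push_neg at hno
  obtain ⟨x, x', y, hx, hx', hne⟩ := hov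
  apply hne
  have hmy : 0 < margY P y :=
    lt_of_lt_of_le hx (Finset.single_le_sum (fun z _ => hP0 (z, y)) (Finset.mem_univ x))
  set l := fY P y with hl
  have hlx : 0 < l x := div_pos hx hmy
  have hlx' : 0 < l x' := div_pos hx' hmy
  have hmypos : ∀ y₁ (z : 𝒳), 0 < P (z, y₁) → 0 < margY P y₁ := fun y₁ z h =>
    lt_of_lt_of_le h (Finset.single_le_sum (fun w _ => hP0 (w, y₁)) (Finset.mem_univ z))
  have key1 : ∀ y₁, 0 < P (x, y₁) → fY P y₁ = l := fun y₁ h₁ => hno y₁ y x h₁ hx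
  have key1' : ∀ y₁, 0 < P (x', y₁) → fY P y₁ = l := fun y₁ h₁ => hno y₁ y x' h₁ hx'
  have hval : ∀ y₁ (z : 𝒳), fY P y₁ = l → P (z, y₁) = l z * margY P y₁ := by
    intro y₁ z hfy
    have h1 : P (z, y₁) / margY P y₁ = l z := by rw [← hfy]; rfl
    by_cases hm : margY P y₁ = 0
    · have : P (z, y₁) = 0 := le_antisymm (by
        have := Finset.single_le_sum (fun w _ => hP0 (w, y₁)) (Finset.mem_univ z)
        rw [show (∑ w, P (w, y₁)) = margY P y₁ from rfl, hm] at this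
        exact this) (hP0 _)
      rw [this, hm, mul_zero]
    · rw [← h1, div_mul_cancel₀ _ hm]
  have hprop : ∀ y₁, P (x, y₁) * l x' = P (x', y₁) * l x := by
    intro y₁
    by_cases hp : 0 < P (x, y₁)
    · have hfy := key1 y₁ hp
      rw [hval y₁ x hfy, hval y₁ x' hfy]
      ring
    · have hzero1 : P (x, y₁) = 0 := le_antisymm (not_lt.mp hp) (hP0 _)
      have hzero2 : P (x', y₁) = 0 := by
        by_contra hne2
        have hp' : 0 < P (x', y₁) := lt_of_le_of_ne (hP0 _) (Ne.symm hne2)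
        have hfy := key1' y₁ hp'
        have hcontr := hval y₁ x hfy
        rw [hzero1] at hcontr
        have hmpos := hmypos y₁ x' hp'
        exact absurd hcontr (ne_of_lt (mul_pos hlx hmpos))
      rw [hzero1, hzero2, zero_mul, zero_mul]
  have hmx : 0 < margX P x :=
    lt_of_lt_of_le hx (Finset.single_le_sum (fun w _ => hP0 (x, w)) (Finset.mem_univ y))
  have hmx' : 0 < margX P x' :=
    lt_of_lt_of_le hx' (Finset.single_le_sum (fun w _ => hP0 (x', w)) (Finset.mem_univ y))
  have hm : margX P x * l x' = margX P x' * l x := by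
    rw [margX, margX, Finset.sum_mul, Finset.sum_mul]
    exact Finset.sum_congr rfl fun y₁ _ => hprop y₁
  funext y₁
  rw [fX, fX]
  rw [div_eq_div_iff (ne_of_gt hmx) (ne_of_gt hmx')]
  have h1 : P (x, y₁) * margX P x' * l x = P (x', y₁) * margX P x * l x := by
    calc P (x, y₁) * margX P x' * l x = P (x, y₁) * (margX P x' * l x) := by ring
      _ = P (x, y₁) * (margX P x * l x') := by rw [← hm]
      _ = P (x, y₁) * l x' * margX P x := by ring
      _ = P (x', y₁) * l x * margX P x := by rw [hprop y₁]
      _ = P (x', y₁) * margX P x * l x := by ring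
  exact mul_right_cancel₀ (ne_of_gt hlx) h1

theorem sideB {𝒳 : Type*} {𝒴 : Type*} [Fintype 𝒳] [Fintype 𝒴] (P : 𝒳 × 𝒴 → ℝ)
    (hP0 : ∀ xy, 0 ≤ P xy)
    (hov : ∃ x x' y, 0 < P (x, y) ∧ 0 < P (x', y) ∧ fX P x ≠ fX P x') :
    0 < vNE (rhoKB P) - vNE (rhoBcan P) := by
  have hm0 : ∀ x, 0 ≤ margX P x := fun x => Finset.sum_nonneg fun y _ => hP0 (x, y)
  set s : Finset 𝒳 := Finset.univ.filter fun x => 0 < margX P x with hs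
  set K : Finset (𝒴 → ℝ) := s.image (fX P) with hK
  set q : ↥K → ℝ :=
    fun k => ∑ x ∈ Finset.univ.filter fun x => 0 < margX P x ∧ fX P x = (k : 𝒴 → ℝ),
      margX P x with hqdef
  set ψ : ↥K → 𝒴 → ℝ := fun k y => Real.sqrt ((k : 𝒴 → ℝ) y) with hψdef
  -- basic facts about members of K
  have hkmem : ∀ k : ↥K, ∃ x, 0 < margX P x ∧ fX P x = (k : 𝒴 → ℝ) := by
    intro k
    obtain ⟨x, hx, hfx⟩ := Finset.mem_image.mp k.2
    exact ⟨x, (Finset.mem_filter.mp hx).2, hfx⟩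
  have hk0 : ∀ (k : ↥K) (y : 𝒴), 0 ≤ (k : 𝒴 → ℝ) y := by
    intro k y
    obtain ⟨x, hx, hfx⟩ := hkmem k
    rw [← hfx]
    exact div_nonneg (hP0 (x, y)) (hm0 x)
  have hk1 : ∀ k : ↥K, ∑ y, (k : 𝒴 → ℝ) y = 1 := by
    intro k
    obtain ⟨x, hx, hfx⟩ := hkmem k
    rw [← hfx]
    rw [show ∑ y, fX P x y = (∑ y, P (x, y)) / margX P x from by
      rw [Finset.sum_div]; rfl]
    exact div_self (ne_of_gt hx)
  have hψb : ∀ k : ↥K, ∑ y, (ψ k y)^2 = 1 := by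
    intro k
    rw [show ∑ y, (ψ k y)^2 = ∑ y, (k : 𝒴 → ℝ) y from
      Finset.sum_congr rfl fun y _ => Real.sq_sqrt (hk0 k y)]
    exact hk1 k
  have hq0 : ∀ k, 0 ≤ q k := fun k => Finset.sum_nonneg fun x _ => hm0 x
  -- rewriting rhoBcan
  have hB : rhoBcan P = Matrix.of fun y y' => ((∑ k : ↥K, q k * (ψ k y * ψ k y') : ℝ) : ℂ) := by
    ext y y'
    rw [rhoBcan, Matrix.of_apply, Matrix.of_apply]
    congr 1
    have h1 : ∑ x, margX P x * (Real.sqrt (P (x, y) / margX P x) *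
        Real.sqrt (P (x, y') / margX P x))
        = ∑ x ∈ s, margX P x * (Real.sqrt (fX P x y) * Real.sqrt (fX P x y')) := by
      rw [hs]
      refine (Finset.sum_filter_of_ne fun x _ hne => ?_).symm
      by_contra hnot
      have : margX P x = 0 := le_antisymm (not_lt.mp hnot) (hm0 x)
      exact hne (by rw [this, zero_mul])
    have h2 : ∑ x ∈ s, margX P x * (Real.sqrt (fX P x y) * Real.sqrt (fX P x y'))
        = ∑ k ∈ K, ∑ x ∈ s.filter (fun x => fX P x = k),
            margX P x * (Real.sqrt (fX P x y) * Real.sqrt (fX P x y')) :=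
      (Finset.sum_fiberwise_of_maps_to (fun x hx => Finset.mem_image_of_mem _ hx) _).symm
    have h3 : ∀ k ∈ K, ∑ x ∈ s.filter (fun x => fX P x = k),
        margX P x * (Real.sqrt (fX P x y) * Real.sqrt (fX P x y'))
        = (∑ x ∈ s.filter (fun x => fX P x = k), margX P x)
            * (Real.sqrt (k y) * Real.sqrt (k y')) := by
      intro k hk
      rw [Finset.sum_mul]
      refine Finset.sum_congr rfl fun x hx => ?_
      rw [(Finset.mem_filter.mp hx).2]
    rw [h1, h2, Finset.sum_congr rfl h3, ← Finset.sum_coe_sort K]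
    refine Finset.sum_congr rfl fun k _ => ?_
    rw [hqdef, hψdef]
    congr 2
    rw [hs, Finset.filter_filter]
  -- rewriting rhoKB
  set Ψ : ↥K → ↥K × 𝒴 → ℝ := fun k p => if p.1 = k then ψ k p.2 else 0 with hΨdef
  have hΨ1 : ∀ (k : ↥K) (y : 𝒴), Ψ k (k, y) = ψ k y := fun k y => by simp [hΨdef]
  have hΨ0 : ∀ (k k' : ↥K) (y : 𝒴), k' ≠ k → Ψ k (k', y) = 0 := fun k k' y hne => by
    simp [hΨdef, hne]
  have hKB : rhoKB P = Matrix.of fun p p' =>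
      ((∑ k : ↥K, q k * (Ψ k p * Ψ k p') : ℝ) : ℂ) := by
    ext p p'
    rw [rhoKB, Matrix.of_apply, Matrix.of_apply]
    by_cases h : p.1 = p'.1
    · rw [if_pos h]
      congr 1
      have h1 : ∑ x ∈ Finset.univ.filter fun x => 0 < margX P x ∧ fX P x = (p.1 : 𝒴 → ℝ),
          margX P x * (Real.sqrt (P (x, p.2) / margX P x) * Real.sqrt (P (x, p'.2) / margX P x))
          = q p.1 * (ψ p.1 p.2 * ψ p.1 p'.2) := by
        rw [hqdef, Finset.sum_mul]
        refine Finset.sum_congr rfl fun x hx => ?_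
        rw [hψdef]
        have hfx := (Finset.mem_filter.mp hx).2.2
        rw [show P (x, p.2) / margX P x = fX P x p.2 from rfl,
          show P (x, p'.2) / margX P x = fX P x p'.2 from rfl, hfx]
      rw [h1, Finset.sum_eq_single p.1]
      · rw [show Ψ p.1 p = ψ p.1 p.2 from by rw [show p = (p.1, p.2) from rfl, hΨ1],
          show Ψ p.1 p' = ψ p.1 p'.2 from by
            rw [show p' = (p'.1, p'.2) from rfl, ← h, hΨ1]]
      · intro k _ hk
        rw [show Ψ k p = 0 from by
          rw [show p = (p.1, p.2) from rfl]; exact hΨ0 k p.1 p.2 hk.symm]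
        ring
      · intro hcon
        exact absurd (Finset.mem_univ p.1) hcon
    · rw [if_neg h]
      symm
      rw [Complex.ofReal_eq_zero]
      refine Finset.sum_eq_zero fun k _ => ?_
      by_cases h1 : p.1 = k
      · rw [show Ψ k p' = 0 from by
          rw [show p' = (p'.1, p'.2) from rfl]
          exact hΨ0 k p'.1 p'.2 (fun hh => h (h1.trans hh.symm))]
        ring
      · rw [show Ψ k p = 0 from by
          rw [show p = (p.1, p.2) from rfl]
          exact hΨ0 k p.1 p.2 h1]
        ring
  -- orthonormality of Ψ
  have hnorm : ∀ k : ↥K, ∑ p : ↥K × 𝒴, Ψ k p * Ψ k p = 1 := by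
    intro k
    rw [Fintype.sum_prod_type, Finset.sum_eq_single k]
    · rw [show ∑ y, Ψ k (k, y) * Ψ k (k, y) = ∑ y, (ψ k y)^2 from
        Finset.sum_congr rfl fun y _ => by rw [hΨ1, sq]]
      exact hψb k
    · intro k'' _ hk
      exact Finset.sum_eq_zero fun y _ => by rw [hΨ0 k k'' y hk]; ring
    · intro hcon
      exact absurd (Finset.mem_univ k) hcon
  have hog : ∀ k k' : ↥K, k ≠ k' → ∑ p : ↥K × 𝒴, Ψ k p * Ψ k' p = 0 := by
    intro k k' h
    rw [Fintype.sum_prod_type]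
    refine Finset.sum_eq_zero fun k'' _ => Finset.sum_eq_zero fun y _ => ?_
    by_cases h1 : k'' = k
    · rw [hΨ0 k' k'' y (fun hh => h ((h1.symm.trans hh)))]
      ring
    · rw [hΨ0 k k'' y h1]
      ring
  -- overlap
  have hover : ∃ i j : ↥K, i ≠ j ∧ 0 < q i ∧ 0 < q j ∧ 0 < ∑ y, ψ i y * ψ j y := by
    obtain ⟨x, x', y₀, hx, hx', hne⟩ := hov
    have hmx : 0 < margX P x :=
      lt_of_lt_of_le hx (Finset.single_le_sum (fun y _ => hP0 (x, y)) (Finset.mem_univ y₀))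
    have hmx' : 0 < margX P x' :=
      lt_of_lt_of_le hx' (Finset.single_le_sum (fun y _ => hP0 (x', y)) (Finset.mem_univ y₀))
    have hxs : x ∈ s := Finset.mem_filter.mpr ⟨Finset.mem_univ x, hmx⟩
    have hxs' : x' ∈ s := Finset.mem_filter.mpr ⟨Finset.mem_univ x', hmx'⟩
    refine ⟨⟨fX P x, Finset.mem_image_of_mem _ hxs⟩, ⟨fX P x', Finset.mem_image_of_mem _ hxs'⟩,
      fun hh => hne (congrArg Subtype.val hh), ?_, ?_, ?_⟩
    · refine lt_of_lt_of_le hmx (Finset.single_le_sum (fun z _ => hm0 z) ?_)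
      exact Finset.mem_filter.mpr ⟨Finset.mem_univ x, hmx, rfl⟩
    · refine lt_of_lt_of_le hmx' (Finset.single_le_sum (fun z _ => hm0 z) ?_)
      exact Finset.mem_filter.mpr ⟨Finset.mem_univ x', hmx', rfl⟩
    · refine Finset.sum_pos' (fun y _ => mul_nonneg (Real.sqrt_nonneg _) (Real.sqrt_nonneg _))
        ⟨y₀, Finset.mem_univ y₀, ?_⟩
      rw [hψdef]
      refine mul_pos (Real.sqrt_pos.mpr ?_) (Real.sqrt_pos.mpr ?_)
      · exact div_pos hx hmx
      · exact div_pos hx' hmx'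
  have e1 : vNE (rhoKB P) = -∑ k : ↥K, q k * Real.logb 2 (q k) := by
    rw [hKB]
    exact core_ortho q Ψ hq0 hnorm hog
  have e2 : vNE (rhoBcan P) < -∑ k : ↥K, q k * Real.logb 2 (q k) := by
    rw [hB]
    exact core_strict q ψ hq0 hψb hover
  rw [e1]
  linarith

end helpers

/-- If `P` is a non-trivial primitive, then its canonical embedding is
non-trivial: `S(X↘Y|B) = S(ρ_{KB}) − S(ρ_B) > 0` and `S(Y↘X|A) = S(ρ_{LA}) − S(ρ_A) > 0`. -/
theorem canonical_embedding_nontrivial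
    {𝒳 𝒴 : Type*} [Fintype 𝒳] [Fintype 𝒴] [Nonempty 𝒳] [Nonempty 𝒴]
    (P : 𝒳 × 𝒴 → ℝ) (hP0 : ∀ xy, 0 ≤ P xy) (hP1 : ∑ xy, P xy = 1)
    (hnt : condEntDep P ≠ 0) :
    0 < vNE (rhoKB P) - vNE (rhoBcan P) ∧ 0 < vNE (rhoLA P) - vNE (rhoAcan P) := by
  have hovP := overlap_of_condEntDep P hP0 hnt
  have hovQ := overlap_swap P hP0 hovP
  constructor
  · exact sideB P hP0 hovP
  · have hQ0 : ∀ yx : 𝒴 × 𝒳, 0 ≤ (fun p : 𝒴 × 𝒳 => P (p.2, p.1)) yx := fun yx => hP0 _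
    have hovQ' : ∃ y y' x, 0 < (fun p : 𝒴 × 𝒳 => P (p.2, p.1)) (y, x)
        ∧ 0 < (fun p : 𝒴 × 𝒳 => P (p.2, p.1)) (y', x)
        ∧ fX (fun p : 𝒴 × 𝒳 => P (p.2, p.1)) y ≠ fX (fun p : 𝒴 × 𝒳 => P (p.2, p.1)) y' := by
      obtain ⟨y, y', x, h1, h2, h3⟩ := hovQ
      exact ⟨y, y', x, h1, h2, h3⟩
    exact sideB (fun p : 𝒴 × 𝒳 => P (p.2, p.1)) hQ0 hovQ'
end
end

section
/- (Leakage of randomized Rabin string OT.) Let r ≥ 1. For every phase function θ, the regular embedding ψ_θ of the primitive P^{ROT_r} satisfies S(ρ_B(θ)) = −(1/2 + 2^{−r−1})·log₂(1/2 + 2^{−r−1}) + (2^r − 1)·(r+1)·2^{−r−1}, and I(X;Y) = r/2; hence the leakage Δ(ψ_θ) = −(1/2 + 2^{−r−1})·log₂(1/2 + 2^{−r−1}) + (2^r − 1)·(r+1)·2^{−r−1} − r/2 is the same for every θ. -/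
open scoped BigOperators
open Matrix

noncomputable section

/-- The randomized Rabin string OT primitive `P^{ROT_r}` on `𝒳 = {0,1}^r` and
`𝒴 = {0,1}^r ⊕ {⊥}`: `P(x,y) = 2^{-r-1}` if `y = x` or `y = ⊥`, and `0` otherwise. -/
def PROT (r : ℕ) : (Fin r → Bool) × ((Fin r → Bool) ⊕ Unit) → ℝ := fun p =>
  match p.2 with
  | Sum.inl y => if y = p.1 then 1 / 2 ^ (r + 1) else 0
  | Sum.inr _ => 1 / 2 ^ (r + 1)

namespace LK
lemma exp_unit (t : ℝ) : Complex.exp (Complex.I * t) * star (Complex.exp (Complex.I * t)) = 1 := by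
  rw [Complex.star_def, ← Complex.exp_conj, ← Complex.exp_add]
  simp [_root_.map_mul, Complex.conj_I, Complex.conj_ofReal]

lemma exp_unit' (t : ℝ) : star (Complex.exp (Complex.I * t)) * Complex.exp (Complex.I * t) = 1 := by
  rw [mul_comm]; exact exp_unit t

variable (r : ℕ) (θ : (Fin r → Bool) × ((Fin r → Bool) ⊕ Unit) → ℝ)

def g (x : Fin r → Bool) : ℂ :=
  Complex.exp (Complex.I * θ (x, Sum.inl x)) * star (Complex.exp (Complex.I * θ (x, Sum.inr ())))

lemma g_mul_star (x : Fin r → Bool) : g r θ x * star (g r θ x) = 1 := by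
  unfold g
  rw [StarMul.star_mul, star_star]
  calc Complex.exp (Complex.I * ↑(θ (x, Sum.inl x))) * star (Complex.exp (Complex.I * ↑(θ (x, Sum.inr ())))) *
      (Complex.exp (Complex.I * ↑(θ (x, Sum.inr ()))) * star (Complex.exp (Complex.I * ↑(θ (x, Sum.inl x)))))
      = (Complex.exp (Complex.I * ↑(θ (x, Sum.inl x))) * star (Complex.exp (Complex.I * ↑(θ (x, Sum.inl x))))) *
        (star (Complex.exp (Complex.I * ↑(θ (x, Sum.inr ())))) * Complex.exp (Complex.I * ↑(θ (x, Sum.inr ())))) := by ring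
    _ = 1 := by rw [exp_unit, exp_unit']; ring

lemma star_g_mul (x : Fin r → Bool) : star (g r θ x) * g r θ x = 1 := by
  rw [mul_comm]; exact g_mul_star r θ x

lemma hψl (x b : Fin r → Bool) : regEmb (PROT r) θ (x, Sum.inl b) =
    if b = x then Complex.exp (Complex.I * θ (x, Sum.inl b)) * ((Real.sqrt (1/2^(r+1)) : ℝ) : ℂ) else 0 := by
  by_cases h : b = x <;> simp [regEmb, PROT, h]

lemma hψr (x : Fin r → Bool) (u : Unit) : regEmb (PROT r) θ (x, Sum.inr u) =
    Complex.exp (Complex.I * θ (x, Sum.inr ())) * ((Real.sqrt (1/2^(r+1)) : ℝ) : ℂ) := by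
  simp [regEmb, PROT]

lemma star_s : star ((Real.sqrt ((1:ℝ)/2^(r+1)) : ℝ) : ℂ) = ((Real.sqrt ((1:ℝ)/2^(r+1)) : ℝ) : ℂ) := by
  rw [Complex.star_def, Complex.conj_ofReal]

lemma s_sq : ((Real.sqrt ((1:ℝ)/2^(r+1)) : ℝ) : ℂ) * ((Real.sqrt ((1:ℝ)/2^(r+1)) : ℝ) : ℂ) = (((1:ℝ)/2^(r+1) : ℝ) : ℂ) := by
  rw [← Complex.ofReal_mul, Real.mul_self_sqrt (by positivity)]

lemma M11 (a b : Fin r → Bool) : rhoB (PROT r) θ (Sum.inl a) (Sum.inl b) =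
    if a = b then (((1:ℝ)/2^(r+1) : ℝ) : ℂ) else 0 := by
  by_cases hab : a = b
  · subst hab
    simp only [rhoB, Matrix.of_apply, hψl, if_pos rfl]
    rw [Finset.sum_eq_single a]
    · rw [if_pos rfl]
      rw [StarMul.star_mul, star_s]
      have := exp_unit (θ (a, Sum.inl a))
      rw [if_pos trivial]
      calc Complex.exp (Complex.I * θ (a, Sum.inl a)) * ((Real.sqrt ((1:ℝ)/2^(r+1)) : ℝ) : ℂ) *
          (((Real.sqrt ((1:ℝ)/2^(r+1)) : ℝ) : ℂ) * star (Complex.exp (Complex.I * θ (a, Sum.inl a))))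
          = (Complex.exp (Complex.I * θ (a, Sum.inl a)) * star (Complex.exp (Complex.I * θ (a, Sum.inl a)))) *
            (((Real.sqrt ((1:ℝ)/2^(r+1)) : ℝ) : ℂ) * ((Real.sqrt ((1:ℝ)/2^(r+1)) : ℝ) : ℂ)) := by ring
        _ = _ := by rw [exp_unit, s_sq, one_mul]
    · intro x _ hx
      rw [if_neg (by exact fun h => hx h.symm), zero_mul]
    · intro h; exact absurd (Finset.mem_univ a) h
  · rw [if_neg hab]
    simp only [rhoB, Matrix.of_apply, hψl]
    apply Finset.sum_eq_zero
    intro x _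
    by_cases h1 : a = x
    · rw [if_neg (fun h2 : b = x => hab (h1.trans h2.symm)), star_zero, mul_zero]
    · rw [if_neg (fun h : a = x => h1 h), zero_mul]

lemma M12 (a : Fin r → Bool) (u : Unit) : rhoB (PROT r) θ (Sum.inl a) (Sum.inr u) =
    (((1:ℝ)/2^(r+1) : ℝ) : ℂ) * g r θ a := by
  simp only [rhoB, Matrix.of_apply, hψl, hψr]
  rw [Finset.sum_eq_single a]
  · rw [if_pos rfl, StarMul.star_mul, star_s, g]
    have h1 := s_sq r
    calc Complex.exp (Complex.I * θ (a, Sum.inl a)) * ((Real.sqrt ((1:ℝ)/2^(r+1)) : ℝ) : ℂ) *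
        (((Real.sqrt ((1:ℝ)/2^(r+1)) : ℝ) : ℂ) * star (Complex.exp (Complex.I * θ (a, Sum.inr ()))))
        = (((Real.sqrt ((1:ℝ)/2^(r+1)) : ℝ) : ℂ) * ((Real.sqrt ((1:ℝ)/2^(r+1)) : ℝ) : ℂ)) *
          (Complex.exp (Complex.I * θ (a, Sum.inl a)) * star (Complex.exp (Complex.I * θ (a, Sum.inr ())))) := by ring
      _ = _ := by rw [h1]
  · intro x _ hx
    rw [if_neg (by exact fun h => hx h.symm), zero_mul]
  · intro h; exact absurd (Finset.mem_univ a) h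

lemma M21 (b : Fin r → Bool) (u : Unit) : rhoB (PROT r) θ (Sum.inr u) (Sum.inl b) =
    (((1:ℝ)/2^(r+1) : ℝ) : ℂ) * star (g r θ b) := by
  have := M12 r θ b u
  have herm : rhoB (PROT r) θ (Sum.inr u) (Sum.inl b) = star (rhoB (PROT r) θ (Sum.inl b) (Sum.inr u)) := by
    simp only [rhoB, Matrix.of_apply, star_sum]
    apply Finset.sum_congr rfl
    intro x _
    rw [StarMul.star_mul, star_star, mul_comm]
  rw [herm, this, StarMul.star_mul, Complex.star_def, Complex.conj_ofReal, mul_comm]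

lemma M22 (u u' : Unit) : rhoB (PROT r) θ (Sum.inr u) (Sum.inr u') = ((2:ℂ)^r) * (((1:ℝ)/2^(r+1) : ℝ) : ℂ) := by
  simp only [rhoB, Matrix.of_apply, hψr]
  have hterm : ∀ x : Fin r → Bool,
      Complex.exp (Complex.I * θ (x, Sum.inr ())) * ((Real.sqrt ((1:ℝ)/2^(r+1)) : ℝ) : ℂ) *
        star (Complex.exp (Complex.I * θ (x, Sum.inr ())) * ((Real.sqrt ((1:ℝ)/2^(r+1)) : ℝ) : ℂ)) =
      (((1:ℝ)/2^(r+1) : ℝ) : ℂ) := by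
    intro x
    rw [StarMul.star_mul, star_s]
    calc Complex.exp (Complex.I * θ (x, Sum.inr ())) * ((Real.sqrt ((1:ℝ)/2^(r+1)) : ℝ) : ℂ) *
        (((Real.sqrt ((1:ℝ)/2^(r+1)) : ℝ) : ℂ) * star (Complex.exp (Complex.I * θ (x, Sum.inr ()))))
        = (Complex.exp (Complex.I * θ (x, Sum.inr ())) * star (Complex.exp (Complex.I * θ (x, Sum.inr ())))) *
          (((Real.sqrt ((1:ℝ)/2^(r+1)) : ℝ) : ℂ) * ((Real.sqrt ((1:ℝ)/2^(r+1)) : ℝ) : ℂ)) := by ring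
      _ = _ := by rw [exp_unit, s_sq, one_mul]
  rw [Finset.sum_congr rfl (fun x _ => hterm x), Finset.sum_const]
  simp [Fintype.card_fun]

def z : (Fin r → Bool) ⊕ Unit → ℂ := Sum.elim (g r θ) (fun _ => -1)

lemma hcast : (((1:ℝ)/2^(r+1) : ℝ) : ℂ) = 1 / 2^(r+1) := by push_cast; ring

lemma hNc : ((2:ℂ)^r) * (1 / 2^(r+1)) = 1/2 := by
  rw [pow_succ]
  have h : (2:ℂ)^r ≠ 0 := pow_ne_zero _ two_ne_zero
  field_simp

lemma Mz : rhoB (PROT r) θ *ᵥ z r θ = 0 := by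
  funext y
  show ∑ t, rhoB (PROT r) θ y t * z r θ t = 0
  rw [Fintype.sum_sum_type]
  cases y with
  | inl a =>
    simp only [M11, M12, z, Sum.elim_inl, Sum.elim_inr, ite_mul, zero_mul,
      Finset.sum_ite_eq, Finset.mem_univ, if_true, Finset.sum_const, Finset.card_univ,
      Fintype.card_unit, one_smul]
    ring
  | inr u =>
    simp only [M21, M22, z, Sum.elim_inl, Sum.elim_inr]
    have hterm : ∀ b, (((1:ℝ)/2^(r+1) : ℝ) : ℂ) * star (g r θ b) * g r θ b = (((1:ℝ)/2^(r+1) : ℝ) : ℂ) := by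
      intro b; rw [mul_assoc, star_g_mul, mul_one]
    rw [Finset.sum_congr rfl (fun b _ => hterm b), Finset.sum_const, Finset.card_univ]
    simp only [Fintype.card_fun, Fintype.card_bool, Fintype.card_fin, Finset.sum_const,
      Finset.card_univ, Fintype.card_unit, one_smul, nsmul_eq_mul]
    rw [hcast]
    push_cast
    rw [hNc]
    ring

lemma hB : (rhoB (PROT r) θ - ((((1:ℝ)/2^(r+1) : ℝ)):ℂ) • 1) *
    (rhoB (PROT r) θ - (((((1:ℝ)/2^(r+1) : ℝ)):ℂ) + 1/2) • 1) =
    Matrix.of (fun y y' => (((((1:ℝ)/2^(r+1) : ℝ)):ℂ))^2 * (z r θ y * star (z r θ y'))) := by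
  have hp : (2:ℂ)^(r+1) ≠ 0 := pow_ne_zero _ two_ne_zero
  have hp' : (2:ℂ)^r ≠ 0 := pow_ne_zero _ two_ne_zero
  ext y y'
  rw [Matrix.mul_apply, Fintype.sum_sum_type]
  simp only [Matrix.sub_apply, Matrix.smul_apply, Matrix.one_apply, smul_eq_mul, Matrix.of_apply]
  cases y with
  | inl a =>
    rw [Finset.sum_eq_zero (fun t _ => ?_)]
    rotate_left
    · -- X-sum term vanishes
      simp only [M11, Sum.inl.injEq, reduceCtorEq, if_false, mul_zero, sub_zero]
      by_cases h : a = t <;> simp [h]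
    cases y' with
    | inl b =>
      simp only [M12, M21, M11, reduceCtorEq, if_false, mul_zero, sub_zero, z, Sum.elim_inl,
        Fintype.sum_unique, Finset.univ_unique, Finset.sum_singleton]
      ring
    | inr u =>
      simp only [M12, M22, reduceCtorEq, if_false, mul_zero, sub_zero, mul_one, z, Sum.elim_inl,
        Sum.elim_inr, Fintype.sum_unique, Finset.univ_unique, Finset.sum_singleton]
      rw [hcast]
      push_cast
      rw [pow_succ]
      field_simp
      ring_nf
      try simp [mul_assoc, ← mul_pow]
  | inr u =>
    cases y' with
    | inl b =>
      rw [Finset.sum_congr rfl (fun t _ => ?_) (g := fun t =>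
        if t = b then (((1:ℝ)/2^(r+1) : ℝ):ℂ) * star (g r θ b) * (-(1/2)) else 0)]
      rotate_left
      · simp only [M21, M11, Sum.inl.injEq, reduceCtorEq, if_false, mul_zero, sub_zero]
        by_cases h : t = b <;> simp [h] <;> ring
      rw [Finset.sum_ite_eq']
      simp only [Finset.mem_univ, if_true, M22, M21, reduceCtorEq, if_false, mul_zero, sub_zero,
        mul_one, z, Sum.elim_inl, Sum.elim_inr, Fintype.sum_unique, Finset.univ_unique,
        Finset.sum_singleton]
      rw [hcast]
      push_cast
      rw [pow_succ]
      field_simp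
      ring_nf
      try simp [mul_assoc, ← mul_pow]
    | inr u' =>
      rw [Finset.sum_congr rfl (fun t _ => ?_) (g := fun _ =>
        ((((1:ℝ)/2^(r+1) : ℝ)):ℂ)^2)]
      rotate_left
      · simp only [M21, M12, reduceCtorEq, if_false, mul_zero, sub_zero]
        calc (((1:ℝ)/2^(r+1) : ℝ):ℂ) * star (g r θ t) * ((((1:ℝ)/2^(r+1) : ℝ):ℂ) * g r θ t)
            = (((1:ℝ)/2^(r+1) : ℝ):ℂ) * (((1:ℝ)/2^(r+1) : ℝ):ℂ) * (star (g r θ t) * g r θ t) := by ring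
          _ = _ := by rw [star_g_mul]; ring
      rw [Finset.sum_const, Finset.card_univ]
      simp only [M22, reduceCtorEq, if_false, mul_zero, sub_zero, mul_one, z, Sum.elim_inr,
        Fintype.sum_unique, Finset.univ_unique, Finset.sum_singleton, Fintype.card_fun,
        Fintype.card_bool, Fintype.card_fin, nsmul_eq_mul]
      rw [hcast]
      push_cast
      rw [pow_succ]
      field_simp
      ring_nf
      try simp [mul_assoc, ← mul_pow]

lemma rhoB_herm {X Y : Type*} [Fintype X] (P θ : X × Y → ℝ) : (rhoB P θ).IsHermitian := by
  ext y y'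
  simp only [Matrix.conjTranspose_apply, rhoB, Matrix.of_apply, star_sum]
  refine Finset.sum_congr rfl fun x _ => ?_
  rw [StarMul.star_mul, star_star, mul_comm]

lemma hMB : rhoB (PROT r) θ * ((rhoB (PROT r) θ - ((((1:ℝ)/2^(r+1) : ℝ)):ℂ) • 1) *
    (rhoB (PROT r) θ - (((((1:ℝ)/2^(r+1) : ℝ)):ℂ) + 1/2) • 1)) = 0 := by
  rw [hB]
  ext y y'
  rw [Matrix.mul_apply]
  have hz := congrFun (Mz r θ) y
  simp only [Matrix.mulVec, dotProduct, Pi.zero_apply] at hz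
  calc ∑ t, rhoB (PROT r) θ y t * ((((1:ℝ)/2^(r+1) : ℝ):ℂ)^2 * (z r θ t * star (z r θ y')))
      = (∑ t, rhoB (PROT r) θ y t * z r θ t) * ((((1:ℝ)/2^(r+1) : ℝ):ℂ)^2 * star (z r θ y')) := by
        rw [Finset.sum_mul]; exact Finset.sum_congr rfl fun t _ => by ring
    _ = 0 := by rw [hz]; simp

lemma trace_eq_sum_eig {n : Type*} [Fintype n] [DecidableEq n] {A : Matrix n n ℂ}
    (hA : A.IsHermitian) : A.trace = ∑ i, (hA.eigenvalues i : ℂ) := by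
  exact hA.trace_eq_sum_eigenvalues

lemma htrace : (rhoB (PROT r) θ).trace = 1 := by
  rw [Matrix.trace]
  rw [Fintype.sum_sum_type]
  simp only [Matrix.diag_apply, M11, if_pos rfl, M22, Finset.sum_const, Finset.card_univ,
    Fintype.card_fun, Fintype.card_bool, Fintype.card_fin, Fintype.card_unit, one_smul,
    nsmul_eq_mul, Fintype.sum_unique, Finset.univ_unique, Finset.sum_singleton]
  rw [hcast]
  push_cast
  rw [pow_succ]
  field_simp
  ring_nf
  simp
  norm_num

lemma eig_aux (lam : ℝ) (v : ((Fin r → Bool) ⊕ Unit) → ℂ) (hvne : v ≠ 0)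
    (hv1 : rhoB (PROT r) θ *ᵥ v = lam • v) :
    lam = 0 ∨ lam = 1/2^(r+1) ∨ lam = 1/2^(r+1) + 1/2 := by
  have hreal : ∀ (t : ℝ) (w : ((Fin r → Bool) ⊕ Unit) → ℂ), t • w = ((t:ℂ)) • w := by
    intro t w; funext j; simp [Complex.real_smul]
  have h2 : (rhoB (PROT r) θ - (((((1:ℝ)/2^(r+1) : ℝ)):ℂ) + 1/2) • 1) *ᵥ v
      = (((lam:ℂ)) - ((((1:ℝ)/2^(r+1) : ℝ):ℂ) + 1/2)) • v := by
    rw [Matrix.sub_mulVec, Matrix.smul_mulVec, Matrix.one_mulVec, hv1, hreal, ← sub_smul]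
  have h3 : (rhoB (PROT r) θ - ((((1:ℝ)/2^(r+1) : ℝ)):ℂ) • 1) *ᵥ v
      = (((lam:ℂ)) - (((1:ℝ)/2^(r+1) : ℝ):ℂ)) • v := by
    rw [Matrix.sub_mulVec, Matrix.smul_mulVec, Matrix.one_mulVec, hv1, hreal, ← sub_smul]
  have h0 : (0 : Matrix ((Fin r → Bool) ⊕ Unit) ((Fin r → Bool) ⊕ Unit) ℂ) *ᵥ v = 0 := Matrix.zero_mulVec v
  rw [← hMB r θ, ← Matrix.mulVec_mulVec, ← Matrix.mulVec_mulVec, h2, Matrix.mulVec_smul, h3,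
    Matrix.mulVec_smul, Matrix.mulVec_smul, hv1, hreal] at h0
  rw [smul_smul, smul_smul] at h0
  have hs : ((lam:ℂ) - ((((1:ℝ)/2^(r+1) : ℝ):ℂ) + 1/2)) * (((lam:ℂ) - (((1:ℝ)/2^(r+1) : ℝ):ℂ)) * (lam:ℂ)) = 0 := by
    rcases smul_eq_zero.mp h0 with h | h
    · linear_combination h
    · exact absurd h hvne
  rcases mul_eq_zero.mp hs with h | h
  · right; right
    have : ((lam - ((1:ℝ)/2^(r+1) + 1/2) : ℝ) : ℂ) = 0 := by push_cast; push_cast at h; linear_combination h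
    have := Complex.ofReal_eq_zero.mp this
    linarith [sub_eq_zero.mp this]
  · rcases mul_eq_zero.mp h with h' | h'
    · right; left
      have : ((lam - (1:ℝ)/2^(r+1) : ℝ) : ℂ) = 0 := by push_cast; push_cast at h'; linear_combination h'
      have := Complex.ofReal_eq_zero.mp this
      linarith [sub_eq_zero.mp this]
    · left; exact_mod_cast h'

lemma eig_mem (inst : DecidableEq ((Fin r → Bool) ⊕ Unit)) (i : (Fin r → Bool) ⊕ Unit) :
    @Matrix.IsHermitian.eigenvalues ℂ _ _ _ _ inst (rhoB_herm (PROT r) θ) i = 0 ∨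
    @Matrix.IsHermitian.eigenvalues ℂ _ _ _ _ inst (rhoB_herm (PROT r) θ) i = 1/2^(r+1) ∨
    @Matrix.IsHermitian.eigenvalues ℂ _ _ _ _ inst (rhoB_herm (PROT r) θ) i = 1/2^(r+1) + 1/2 := by
  apply eig_aux r θ _ ((WithLp.equiv 2 _) ((@Matrix.IsHermitian.eigenvectorBasis ℂ _ _ _ _ inst (rhoB_herm (PROT r) θ)) i))
  · intro h
    apply ((@Matrix.IsHermitian.eigenvectorBasis ℂ _ _ _ _ inst (rhoB_herm (PROT r) θ)).orthonormal.ne_zero i)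
    have heq : ((WithLp.equiv 2 (((Fin r → Bool) ⊕ Unit) → ℂ)).symm
        ((WithLp.equiv 2 _) ((@Matrix.IsHermitian.eigenvectorBasis ℂ _ _ _ _ inst (rhoB_herm (PROT r) θ)) i)) : EuclideanSpace ℂ ((Fin r → Bool) ⊕ Unit)) =
        (@Matrix.IsHermitian.eigenvectorBasis ℂ _ _ _ _ inst (rhoB_herm (PROT r) θ)) i :=
      Equiv.symm_apply_apply _ _
    rw [← heq, h]
    simp
  · exact @Matrix.IsHermitian.mulVec_eigenvectorBasis ℂ _ _ _ _ inst (rhoB_herm (PROT r) θ) i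


lemma card_Y : Fintype.card ((Fin r → Bool) ⊕ Unit) = 2^r + 1 := by
  simp [Fintype.card_sum, Fintype.card_fun]

lemma vNE_part (hr : 1 ≤ r) (inst : DecidableEq ((Fin r → Bool) ⊕ Unit)) :
    -∑ i, (@Matrix.IsHermitian.eigenvalues ℂ _ _ _ _ inst (rhoB_herm (PROT r) θ)) i *
        Real.logb 2 ((@Matrix.IsHermitian.eigenvalues ℂ _ _ _ _ inst (rhoB_herm (PROT r) θ)) i) =
      -(1 / 2 + 1 / 2 ^ (r + 1)) * Real.logb 2 (1 / 2 + 1 / 2 ^ (r + 1)) +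
        ((2 : ℝ) ^ r - 1) * ((r : ℝ) + 1) / 2 ^ (r + 1) := by
  set lam : ((Fin r → Bool) ⊕ Unit) → ℝ :=
    @Matrix.IsHermitian.eigenvalues ℂ _ _ _ _ inst (rhoB_herm (PROT r) θ) with hlam
  set c : ℝ := (1:ℝ)/2^(r+1) with hcdef
  have hcpos : 0 < c := by rw [hcdef]; positivity
  have hne1 : ¬ ((0:ℝ) = c) := ne_of_lt hcpos
  have hne2 : ¬ ((0:ℝ) = c + 1/2) := by intro h; linarith
  have hne3 : ¬ (c = c + 1/2) := by intro h; linarith [h]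
  have hne4 : ¬ (c + 1/2 = c) := by intro h; linarith [h]
  -- trace identity
  have htr : ∑ i, lam i = 1 := by
    have h1 : (rhoB (PROT r) θ).trace = ∑ i, ((lam i : ℝ) : ℂ) :=
      @trace_eq_sum_eig _ _ inst _ (rhoB_herm (PROT r) θ)
    rw [htrace r θ] at h1
    have h2 : ((∑ i, lam i : ℝ) : ℂ) = 1 := by push_cast; rw [← h1]
    exact_mod_cast h2
  -- counting
  set a : ℕ := (Finset.univ.filter (fun i => lam i = c)).card with hadef
  set b : ℕ := (Finset.univ.filter (fun i => lam i = c + 1/2)).card with hbdef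
  have hdec : ∀ i, lam i = (if lam i = c then c else 0) + (if lam i = c + 1/2 then c + 1/2 else 0) := by
    intro i
    rcases eig_mem r θ inst i with h | h | h <;> (try rw [← hlam] at h) <;> (try rw [← hcdef] at h) <;> rw [h]
    · rw [if_neg hne1, if_neg hne2]; norm_num
    · rw [if_pos rfl, if_neg hne3]; norm_num
    · rw [if_neg hne4, if_pos rfl]; norm_num
  have hsum2 : ∑ i, lam i = a * c + b * (c + 1/2) := by
    rw [Finset.sum_congr rfl (fun i _ => hdec i), Finset.sum_add_distrib,
      Finset.sum_ite, Finset.sum_ite]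
    simp only [Finset.sum_const, smul_zero, smul_eq_mul, add_zero, nsmul_eq_mul,
      Finset.sum_const_zero]
    try rw [← hadef, ← hbdef]
  have hab : (a:ℝ) * c + (b:ℝ) * (c + 1/2) = 1 := by rw [← hsum2, htr]
  have hcard : a + b ≤ 2^r + 1 := by
    have hdisj : Disjoint (Finset.univ.filter (fun i => lam i = c))
        (Finset.univ.filter (fun i => lam i = c + 1/2)) := by
      rw [Finset.disjoint_left]
      intro i h1 h2
      rw [Finset.mem_filter] at h1 h2
      exact hne3 (h1.2 ▸ h2.2)
    calc a + b = ((Finset.univ.filter (fun i => lam i = c)) ∪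
        (Finset.univ.filter (fun i => lam i = c + 1/2))).card := (Finset.card_union_of_disjoint hdisj).symm
      _ ≤ Fintype.card ((Fin r → Bool) ⊕ Unit) := Finset.card_le_univ _
      _ = 2^r + 1 := card_Y r
  have hnat : a + (2^r + 1) * b = 2^(r+1) := by
    have hre : (a:ℝ) + ((2:ℝ)^r + 1) * b = 2^(r+1) := by
      rw [hcdef] at hab
      field_simp at hab
      have h4p : (4 * (2:ℝ)^r) ≠ 0 := by positivity
      apply mul_left_cancel₀ h4p
      rw [pow_succ]
      linear_combination (2 * (2:ℝ)^r) * hab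
    exact_mod_cast hre
  have h2r : 2 ≤ 2^r := by
    calc 2 = 2^1 := rfl
      _ ≤ 2^r := Nat.pow_le_pow_right (by norm_num) hr
  have hb1 : b = 1 := by
    rcases Nat.lt_or_ge b 1 with h | h
    · exfalso
      have hb0 : b = 0 := by omega
      rw [hb0, Nat.mul_zero, Nat.add_zero, pow_succ] at hnat
      omega
    rcases Nat.lt_or_ge b 2 with h' | h'
    · omega
    · exfalso
      have : (2^r + 1) * 2 ≤ (2^r + 1) * b := Nat.mul_le_mul_left _ h'
      rw [pow_succ] at hnat
      omega
  have ha1 : a = 2^r - 1 := by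
    rw [hb1, Nat.mul_one, pow_succ] at hnat
    omega
  -- now compute the entropy sum
  have hdec2 : ∀ i, lam i * Real.logb 2 (lam i) =
      (if lam i = c then c * Real.logb 2 c else 0) +
      (if lam i = c + 1/2 then (c + 1/2) * Real.logb 2 (c + 1/2) else 0) := by
    intro i
    rcases eig_mem r θ inst i with h | h | h <;> (try rw [← hlam] at h) <;> (try rw [← hcdef] at h) <;> rw [h]
    · rw [if_neg hne1, if_neg hne2]; norm_num
    · rw [if_pos rfl, if_neg hne3]; norm_num
    · rw [if_neg hne4, if_pos rfl]; norm_num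
  have hsum3 : ∑ i, lam i * Real.logb 2 (lam i) =
      a * (c * Real.logb 2 c) + b * ((c + 1/2) * Real.logb 2 (c + 1/2)) := by
    rw [Finset.sum_congr rfl (fun i _ => hdec2 i), Finset.sum_add_distrib,
      Finset.sum_ite, Finset.sum_ite]
    simp only [Finset.sum_const, smul_zero, smul_eq_mul, add_zero, nsmul_eq_mul,
      Finset.sum_const_zero]
    try rw [← hadef, ← hbdef]
  rw [hsum3, ha1, hb1]
  have hacast : ((2^r - 1 : ℕ) : ℝ) = (2:ℝ)^r - 1 := by
    have h1 : (1:ℕ) ≤ 2^r := Nat.one_le_two_pow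
    push_cast [Nat.cast_sub h1]
    ring
  have hlogc : Real.logb 2 c = -((r:ℝ)+1) := by
    rw [hcdef, one_div, Real.logb_inv, Real.logb_pow, Real.logb_self_eq_one (by norm_num : (1:ℝ) < 2)]
    push_cast
    ring
  rw [hacast, hlogc, Nat.cast_one]
  have harg : c + 1/2 = 1/2 + 1/2^(r+1) := by rw [hcdef]; ring
  rw [harg, hcdef]
  ring


lemma margX_PROT (x : Fin r → Bool) : margX (PROT r) x = 2 * ((1:ℝ)/2^(r+1)) := by
  rw [margX, Fintype.sum_sum_type]
  simp only [PROT]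
  rw [Finset.sum_ite_eq' Finset.univ x (fun _ => (1:ℝ)/2^(r+1))]
  simp
  ring

lemma margY_inl (b : Fin r → Bool) : margY (PROT r) (Sum.inl b) = (1:ℝ)/2^(r+1) := by
  rw [margY]
  simp only [PROT]
  rw [Finset.sum_ite_eq Finset.univ b (fun _ => (1:ℝ)/2^(r+1))]
  simp

lemma margY_inr (u : Unit) : margY (PROT r) (Sum.inr u) = 1/2 := by
  rw [margY]
  simp only [PROT]
  rw [Finset.sum_const, Finset.card_univ]
  simp only [Fintype.card_fun, Fintype.card_bool, Fintype.card_fin, nsmul_eq_mul]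
  push_cast
  rw [pow_succ]
  field_simp

lemma mutualInfo_PROT : mutualInfo (PROT r) = (r:ℝ)/2 := by
  rw [mutualInfo]
  have hinner : ∀ x : Fin r → Bool,
      ∑ y, PROT r (x, y) * Real.logb 2 (PROT r (x, y) / (margX (PROT r) x * margY (PROT r) y)) =
      ((1:ℝ)/2^(r+1)) * (r:ℝ) := by
    intro x
    rw [Fintype.sum_sum_type]
    have h1 : ∀ b : Fin r → Bool,
        PROT r (x, Sum.inl b) * Real.logb 2 (PROT r (x, Sum.inl b) /
          (margX (PROT r) x * margY (PROT r) (Sum.inl b))) =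
        if b = x then ((1:ℝ)/2^(r+1)) * (r:ℝ) else 0 := by
      intro b
      rw [margX_PROT, margY_inl]
      by_cases h : b = x
      · rw [if_pos h]
        have hPROT : PROT r (x, Sum.inl b) = (1:ℝ)/2^(r+1) := by simp [PROT, h]
        rw [hPROT]
        congr 1
        have harg : ((1:ℝ)/2^(r+1)) / ((2 * ((1:ℝ)/2^(r+1))) * ((1:ℝ)/2^(r+1))) = 2^r := by
          rw [pow_succ]
          have : (2:ℝ)^r ≠ 0 := by positivity
          field_simp
        rw [harg, Real.logb_pow, Real.logb_self_eq_one (by norm_num : (1:ℝ) < 2), mul_one]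
      · rw [if_neg h]
        have hPROT : PROT r (x, Sum.inl b) = 0 := by simp [PROT, h]
        rw [hPROT, zero_mul]
    rw [Finset.sum_congr rfl (fun b _ => h1 b), Finset.sum_ite_eq' Finset.univ x
      (fun _ => ((1:ℝ)/2^(r+1)) * (r:ℝ))]
    have h2 : ∀ u : Unit,
        PROT r (x, Sum.inr u) * Real.logb 2 (PROT r (x, Sum.inr u) /
          (margX (PROT r) x * margY (PROT r) (Sum.inr u))) = 0 := by
      intro u
      rw [margX_PROT, margY_inr]
      have hPROT : PROT r (x, Sum.inr u) = (1:ℝ)/2^(r+1) := by simp [PROT]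
      rw [hPROT]
      have harg : ((1:ℝ)/2^(r+1)) / ((2 * ((1:ℝ)/2^(r+1))) * ((1:ℝ)/2)) = 1 := by
        have : (2:ℝ)^(r+1) ≠ 0 := by positivity
        field_simp
      rw [harg, Real.logb_one, mul_zero]
    rw [Finset.sum_congr rfl (fun u _ => h2 u), Finset.sum_const]
    simp
  rw [Finset.sum_congr rfl (fun x _ => hinner x), Finset.sum_const, Finset.card_univ]
  simp only [Fintype.card_fun, Fintype.card_bool, Fintype.card_fin, nsmul_eq_mul]
  push_cast
  rw [pow_succ]
  have : (2:ℝ)^r ≠ 0 := by positivity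
  field_simp
end LK


/-- **Leakage of randomized Rabin string OT.** For every phase function `θ`,
the regular embedding `ψ_θ` of `P^{ROT_r}` satisfies
`S(ρ_B(θ)) = −(1/2 + 2^{−r−1})·log₂(1/2 + 2^{−r−1}) + (2^r − 1)·(r+1)·2^{−r−1}` and
`I(X;Y) = r/2`; hence the leakage `Δ(ψ_θ)` is the same for every `θ`. -/
theorem leakage_PROT (r : ℕ) (hr : 1 ≤ r) (θ : (Fin r → Bool) × ((Fin r → Bool) ⊕ Unit) → ℝ) :
    vNE (rhoB (PROT r) θ) =
      -(1 / 2 + 1 / 2 ^ (r + 1)) * Real.logb 2 (1 / 2 + 1 / 2 ^ (r + 1)) +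
        ((2 : ℝ) ^ r - 1) * ((r : ℝ) + 1) / 2 ^ (r + 1) ∧
    mutualInfo (PROT r) = (r : ℝ) / 2 ∧
    leakReg (PROT r) θ =
      -(1 / 2 + 1 / 2 ^ (r + 1)) * Real.logb 2 (1 / 2 + 1 / 2 ^ (r + 1)) +
        ((2 : ℝ) ^ r - 1) * ((r : ℝ) + 1) / 2 ^ (r + 1) - (r : ℝ) / 2 := by
  have h1 : vNE (rhoB (PROT r) θ) =
      -(1 / 2 + 1 / 2 ^ (r + 1)) * Real.logb 2 (1 / 2 + 1 / 2 ^ (r + 1)) +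
        ((2 : ℝ) ^ r - 1) * ((r : ℝ) + 1) / 2 ^ (r + 1) := by
    unfold vNE
    rw [dif_pos (LK.rhoB_herm (PROT r) θ)]
    exact LK.vNE_part r θ hr _
  have h2 : mutualInfo (PROT r) = (r : ℝ) / 2 := LK.mutualInfo_PROT r
  refine ⟨h1, h2, ?_⟩
  unfold leakReg
  rw [h1, h2]
end
end

section
/- (Leakage of randomized Rabin OT of one bit.) For every phase function θ, the regular embedding ψ_θ of the primitive P^{ROT_1} has leakage Δ(ψ_θ) = h(1/4) − 1/2, where h is the binary entropy function h(t) = −t·log₂ t − (1−t)·log₂(1−t). -/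
open scoped BigOperators
open Matrix

noncomputable section

/-- The binary entropy function `h(t) = −t·log₂ t − (1−t)·log₂(1−t)`. -/
def binEnt (t : ℝ) : ℝ := -t * Real.logb 2 t - (1 - t) * Real.logb 2 (1 - t)

/-- The randomized Rabin OT primitive `P^{ROT_1}` on `𝒳 = {0,1}` and `𝒴 = {0,1} ⊕ {⊥}`:
`P(x,y) = 1/4` if `y = x` or `y = ⊥`, and `0` otherwise. -/
def PROT1 : Bool × (Bool ⊕ Unit) → ℝ := fun p =>
  match p.2 with
  | Sum.inl y => if y = p.1 then 1 / 4 else 0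
  | Sum.inr _ => 1 / 4


section Aux

lemma rhoB_isHermitian' {X Y : Type*} [Fintype X] (P θ : X × Y → ℝ) :
    (rhoB P θ).IsHermitian := by
  ext y y'
  simp only [rhoB, conjTranspose_apply, Matrix.of_apply, star_sum, star_mul', star_star]
  exact Finset.sum_congr rfl fun x _ => mul_comm _ _

/-- Explicit form of `rhoB PROT1 θ`. -/
def Mmat (a b : ℂ) : Matrix (Bool ⊕ Unit) (Bool ⊕ Unit) ℂ :=
  Matrix.of fun y y' => match y, y' with
  | .inl false, .inl false => 1/4
  | .inl false, .inl true => 0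
  | .inl false, .inr _ => a
  | .inl true, .inl false => 0
  | .inl true, .inl true => 1/4
  | .inl true, .inr _ => b
  | .inr _, .inl false => star a
  | .inr _, .inl true => star b
  | .inr _, .inr _ => 1/2

lemma sqrt_four' : Real.sqrt 4 = 2 := by
  rw [show (4:ℝ) = 2^2 by norm_num, Real.sqrt_sq] <;> norm_num

lemma sqrt_quarter' : Real.sqrt (1/4) = 1/2 := by
  rw [show (1/4:ℝ) = (1/2)^2 by norm_num, Real.sqrt_sq (by norm_num)]

set_option linter.unreachableTactic false in
set_option linter.unusedTactic false in
set_option linter.unnecessarySeqFocus false in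
lemma rhoB_PROT1_eq (θ : Bool × (Bool ⊕ Unit) → ℝ) :
    rhoB PROT1 θ = Mmat
      (Complex.exp (Complex.I * θ (false, .inl false) - Complex.I * θ (false, .inr ())) / 4)
      (Complex.exp (Complex.I * θ (true, .inl true) - Complex.I * θ (true, .inr ())) / 4) := by
  ext y y'
  rcases y with (_|_) | ⟨⟩ <;> rcases y' with (_|_) | ⟨⟩ <;>
    simp [rhoB, Mmat, regEmb, PROT1, Fintype.sum_bool, sqrt_quarter', sqrt_four',
      sub_eq_add_neg, ← Complex.exp_add, Complex.conj_I, Complex.conj_ofReal] <;>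
    ring_nf <;>
    simp only [← Complex.exp_conj, _root_.map_mul, _root_.map_neg, Complex.conj_I,
      Complex.conj_ofReal, ← Complex.exp_add] <;>
    ring_nf <;> simp [← Complex.exp_add, sub_eq_add_neg] <;> ring_nf

lemma Mmat_poly (a b : ℂ) (ha : a * star a = 1/16) (hb : b * star b = 1/16) :
    Mmat a b * Mmat a b * Mmat a b - Mmat a b * Mmat a b + (3/16 : ℂ) • Mmat a b = 0 := by
  ext y y'
  rcases y with (_|_) | ⟨⟩ <;> rcases y' with (_|_) | ⟨⟩ <;>
    simp only [Matrix.add_apply, Matrix.sub_apply, Matrix.smul_apply, Matrix.mul_apply,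
      Fintype.sum_sum_type, Fintype.sum_bool, Finset.univ_unique, Finset.sum_singleton,
      Mmat, Matrix.of_apply, Matrix.zero_apply, smul_eq_mul]
  · ring
  · ring
  · linear_combination a * ha + a * hb
  · ring
  · ring
  · linear_combination b * ha + b * hb
  · linear_combination star a * ha + star a * hb
  · linear_combination star b * ha + star b * hb
  · linear_combination (1/4 : ℂ) * ha + (1/4 : ℂ) * hb

lemma eig_mem (a b : ℂ) (ha : a * star a = 1/16) (hb : b * star b = 1/16)
    (hH : (Mmat a b).IsHermitian) (i : Bool ⊕ Unit) :
    hH.eigenvalues i = 0 ∨ hH.eigenvalues i = 1/4 ∨ hH.eigenvalues i = 3/4 := by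
  set t := hH.eigenvalues i with ht
  set v : (Bool ⊕ Unit) → ℂ := ⇑(hH.eigenvectorBasis i) with hvdef
  have hv0 : v ≠ 0 := by
    intro h; apply hH.eigenvectorBasis.orthonormal.ne_zero i; ext j; simpa using congrFun h j
  have h1 : (Mmat a b) *ᵥ v = (t : ℂ) • v := by
    rw [hvdef, hH.mulVec_eigenvectorBasis i]
    funext j
    simp [Complex.real_smul, ← ht]
  have h3 : (Mmat a b * Mmat a b * Mmat a b - Mmat a b * Mmat a b + (3/16 : ℂ) • Mmat a b) *ᵥ v
      = (((t:ℂ)^3 - (t:ℂ)^2 + 3/16 * t) : ℂ) • v := by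
    rw [Matrix.add_mulVec, Matrix.sub_mulVec, Matrix.smul_mulVec,
      ← Matrix.mulVec_mulVec, ← Matrix.mulVec_mulVec, ← Matrix.mulVec_mulVec]
    simp only [h1, Matrix.mulVec_smul]
    funext j
    simp [smul_smul]
    ring
  rw [Mmat_poly a b ha hb, Matrix.zero_mulVec] at h3
  have hz : ((t:ℂ)^3 - (t:ℂ)^2 + 3/16 * t) = 0 := by
    rcases smul_eq_zero.mp h3.symm with h | h
    · exact h
    · exact absurd h hv0
  have hzr : t^3 - t^2 + 3/16 * t = 0 := by
    have h' : ((t^3 - t^2 + 3/16 * t : ℝ) : ℂ) = 0 := by push_cast; linear_combination hz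
    exact_mod_cast h'
  have hfac : t * (t - 1/4) * (t - 3/4) = 0 := by linear_combination hzr
  rcases mul_eq_zero.mp hfac with h | h
  · rcases mul_eq_zero.mp h with h' | h'
    · exact Or.inl h'
    · exact Or.inr (Or.inl (by linarith))
  · exact Or.inr (Or.inr (by linarith))

lemma sum_eig (a b : ℂ) (hH : (Mmat a b).IsHermitian) :
    ∑ i, hH.eigenvalues i = 1 := by
  have h := hH.trace_eq_sum_eigenvalues
  have htr : Matrix.trace (Mmat a b) = 1 := by
    simp [Matrix.trace, Mmat, Fintype.sum_sum_type, Fintype.sum_bool]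
    norm_num
  rw [htr] at h
  have h' : (1:ℂ) = ∑ i, (hH.eigenvalues i : ℂ) := by simpa [Function.comp] using h
  exact_mod_cast h'.symm

lemma eigenvalues_indep {n : Type*} [Fintype n] (ρ : Matrix n n ℂ) (h : ρ.IsHermitian)
    (i1 i2 : DecidableEq n) :
    @Matrix.IsHermitian.eigenvalues ℂ _ n _ ρ i1 h
      = @Matrix.IsHermitian.eigenvalues ℂ _ n _ ρ i2 h := by
  congr 1

lemma vNE_Mmat (a b : ℂ) (ha : a * star a = 1/16) (hb : b * star b = 1/16) :
    vNE (Mmat a b) = binEnt (1/4) := by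
  have hH : (Mmat a b).IsHermitian := by
    rw [Matrix.IsHermitian]
    ext y y'
    rcases y with (_|_) | ⟨⟩ <;> rcases y' with (_|_) | ⟨⟩ <;>
      simp [Mmat, conjTranspose_apply] <;>
      first
        | rfl
        | (apply Complex.ext <;> simp [Complex.ext_iff] at ha hb ⊢ <;> norm_num)
  rw [vNE, dif_pos hH]
  rw [eigenvalues_indep (Mmat a b) hH _ inferInstance]
  have hmem := eig_mem a b ha hb hH
  have hsum := sum_eig a b hH
  rw [Fintype.sum_sum_type, Fintype.sum_bool] at hsum ⊢
  simp only [Finset.univ_unique, Finset.sum_singleton] at hsum ⊢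
  set t0 := hH.eigenvalues (Sum.inl true) with h0
  set t1 := hH.eigenvalues (Sum.inl false) with h1
  set t2 := hH.eigenvalues (Sum.inr ()) with h2
  have m0 := hmem (Sum.inl true)
  have m1 := hmem (Sum.inl false)
  have m2 := hmem (Sum.inr ())
  rw [← h0] at m0; rw [← h1] at m1; rw [← h2] at m2
  have hval : binEnt (1/4) = -(1/4 * Real.logb 2 (1/4)) - 3/4 * Real.logb 2 (3/4) := by
    rw [binEnt]; norm_num
  rcases m0 with r0 | r0 | r0 <;> rcases m1 with r1 | r1 | r1 <;> rcases m2 with r2 | r2 | r2 <;>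
    rw [r0, r1, r2] at hsum ⊢ <;>
    first
      | (rw [hval]; ring1)
      | (norm_num at hsum)

lemma mutualInfo_PROT1 : mutualInfo PROT1 = 1 / 2 := by
  simp [mutualInfo, margX, margY, PROT1, Fintype.sum_sum_type, Fintype.sum_bool]
  norm_num [Real.logb_self_eq_one]

lemma star_exp_aux (s t : ℝ) :
    (Complex.exp (Complex.I * s - Complex.I * t) / 4)
      * star (Complex.exp (Complex.I * s - Complex.I * t) / 4) = 1/16 := by
  have : star (Complex.exp (Complex.I * s - Complex.I * t))
      = Complex.exp (-(Complex.I * s - Complex.I * t)) := by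
    rw [Complex.star_def, ← Complex.exp_conj]
    congr 1
    simp [Complex.conj_I, Complex.conj_ofReal]
    ring
  rw [star_div₀, this, div_mul_div_comm, ← Complex.exp_add]
  norm_num

end Aux

/-- **Leakage of randomized Rabin OT of one bit.** For every phase function
`θ`, the regular embedding `ψ_θ` of `P^{ROT_1}` has leakage `Δ(ψ_θ) = h(1/4) − 1/2`. -/
theorem leakage_PROT1 (θ : Bool × (Bool ⊕ Unit) → ℝ) :
    leakReg PROT1 θ = binEnt (1 / 4) - 1 / 2 := by
  have key := rhoB_PROT1_eq θ
  have ha := star_exp_aux (θ (false, .inl false)) (θ (false, .inr ()))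
  have hb := star_exp_aux (θ (true, .inl true)) (θ (true, .inr ()))
  show vNE (rhoB PROT1 θ) - mutualInfo PROT1 = binEnt (1 / 4) - 1 / 2
  rw [key, mutualInfo_PROT1, vNE_Mmat _ _ ha hb]
end
end

section
/- (Leakage of randomized 1-out-of-2 OT.) Every regular embedding ψ_θ of the primitive P^{OT} satisfies S(ρ_B(θ)) ≥ 3/2, and therefore Δ(ψ_θ) ≥ 1/2 (note I(X;Y) = 1 for P^{OT}). Moreover, the canonical embedding (θ ≡ 0) attains equality: S(ρ_B(0)) = 3/2, i.e. its leakage equals 1/2. -/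
open scoped BigOperators
open Matrix

noncomputable section

/-- The randomized 1-out-of-2 OT primitive `P^{OT}` on `𝒳 = {0,1}×{0,1}` and
`𝒴 = {0,1}×{0,1}`: `P((x₀,x₁),(c,y)) = 1/8` if `y = x_c`, and `0` otherwise. -/
def POT : (Bool × Bool) × (Bool × Bool) → ℝ := fun p =>
  if p.2.2 = (if p.2.1 then p.1.2 else p.1.1) then 1 / 8 else 0


/-! ### Auxiliary lemmas for `leakage_POT` -/

section LeakageAux

open scoped ComplexOrder

-- complex exponential helpers
lemma aux_expconj (b : ℝ) :
    (starRingEnd ℂ) (Complex.exp (Complex.I * b)) = Complex.exp (-(Complex.I * b)) := by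
  rw [← Complex.exp_conj]; congr 1; simp [Complex.conj_ofReal]

lemma aux_expmul (a b : ℝ) :
    Complex.exp (Complex.I * a) * (starRingEnd ℂ) (Complex.exp (Complex.I * b)) =
      Complex.exp (Complex.I * ((a : ℂ) - b)) := by
  rw [aux_expconj, ← Complex.exp_add]; congr 1; ring

lemma aux_sqrt8 : ((Real.sqrt 8 : ℝ) : ℂ) * ((Real.sqrt 8 : ℝ) : ℂ) = 8 := by
  rw [← Complex.ofReal_mul, Real.mul_self_sqrt] <;> norm_num

lemma aux_L1 (a b : ℝ) :
    Complex.exp (Complex.I * a) * ((Real.sqrt 8 : ℝ) : ℂ)⁻¹ *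
      ((starRingEnd ℂ) (Complex.exp (Complex.I * b)) * ((Real.sqrt 8 : ℝ) : ℂ)⁻¹) =
    Complex.exp (Complex.I * ((a : ℂ) - b)) / 8 := by
  have hS : ((Real.sqrt 8 : ℝ) : ℂ) ≠ 0 := by simp [Real.sqrt_eq_zero']
  field_simp
  linear_combination 8 * aux_expmul a b - Complex.exp (Complex.I * ((a:ℂ) - b)) * aux_sqrt8

lemma aux_L4 (a b : ℝ) : (starRingEnd ℂ) (Complex.exp (Complex.I * ((a : ℂ) - b))) =
    Complex.exp (Complex.I * ((b : ℂ) - a)) := by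
  rw [← Complex.exp_conj]; congr 1
  simp only [_root_.map_mul, _root_.map_sub, Complex.conj_ofReal, Complex.conj_I]; ring

lemma aux_L3 (a a' : ℝ) :
    Complex.exp (Complex.I * a) * ((Real.sqrt 8 : ℝ) : ℂ)⁻¹ *
      ((starRingEnd ℂ) (Complex.exp (Complex.I * a)) * ((Real.sqrt 8 : ℝ) : ℂ)⁻¹) +
    Complex.exp (Complex.I * a') * ((Real.sqrt 8 : ℝ) : ℂ)⁻¹ *
      ((starRingEnd ℂ) (Complex.exp (Complex.I * a')) * ((Real.sqrt 8 : ℝ) : ℂ)⁻¹) = 1 / 4 := by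
  have h1 := aux_expmul a a
  have h2 := aux_expmul a' a'
  simp only [sub_self, mul_zero, Complex.exp_zero] at h1 h2
  have hS : ((Real.sqrt 8 : ℝ) : ℂ) ≠ 0 := by simp [Real.sqrt_eq_zero']
  field_simp
  linear_combination (4:ℂ) * h1 + 4 * h2 - aux_sqrt8

-- explicit form of `rhoB POT θ`
def Rz (z : Bool → Bool → ℂ) : Matrix (Bool × Bool) (Bool × Bool) ℂ :=
  Matrix.of fun y y' =>
    match y, y' with
    | (false, t), (false, t') => if t = t' then 1/4 else 0
    | (false, t), (true, t')  => z t t' / 8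
    | (true, t), (false, t')  => star (z t' t) / 8
    | (true, t), (true, t')   => if t = t' then 1/4 else 0

def zfun (θ : (Bool × Bool) × (Bool × Bool) → ℝ) (t t' : Bool) : ℂ :=
  Complex.exp (Complex.I * ((θ ((t, t'), (false, t)) : ℂ) - (θ ((t, t'), (true, t')) : ℂ)))

lemma zfun_unit (θ : (Bool × Bool) × (Bool × Bool) → ℝ) (t t' : Bool) :
    zfun θ t t' * star (zfun θ t t') = 1 := by
  unfold zfun
  rw [Complex.star_def, aux_L4, ← Complex.exp_add]
  ring_nf
  exact Complex.exp_zero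

lemma zfun_zero : zfun (fun _ => 0) = fun _ _ => (1:ℂ) := by
  funext t t'
  simp [zfun]

lemma rhoB_POT_eq (θ : (Bool × Bool) × (Bool × Bool) → ℝ) :
    rhoB POT θ = Rz (zfun θ) := by
  ext ⟨c, t⟩ ⟨c', t'⟩
  simp only [rhoB, Rz, Matrix.of_apply, regEmb, POT, zfun, Fintype.sum_prod_type,
    Fintype.sum_bool]
  cases c <;> cases c' <;> cases t <;> cases t' <;>
    · norm_num
      try first
        | exact aux_L3 _ _
        | exact aux_L1 _ _
        | (rw [aux_L4]; exact aux_L1 _ _)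

lemma rhoB_posSemidef {X Y : Type*} [Fintype X] [Fintype Y] (P θ : X × Y → ℝ) :
    (rhoB P θ).PosSemidef := by
  have h : rhoB P θ = (Matrix.of fun (x : X) (y : Y) => star (regEmb P θ (x, y)))ᴴ *
      (Matrix.of fun (x : X) (y : Y) => star (regEmb P θ (x, y))) := by
    ext y y'
    simp [Matrix.mul_apply, Matrix.conjTranspose_apply, rhoB, mul_comm]
  rw [h]
  exact Matrix.posSemidef_conjTranspose_mul_self _

-- traces of the explicit matrix
lemma trR1 (z : Bool → Bool → ℂ) : (Rz z).trace = 1 := by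
  simp [Matrix.trace, Rz, Fintype.sum_prod_type, Fintype.sum_bool, Matrix.diag]
  norm_num

lemma trR2 (z : Bool → Bool → ℂ) (hz : ∀ t t', z t t' * star (z t t') = 1) :
    ((Rz z) ^ 2).trace = 3/8 := by
  rw [pow_two]
  simp only [Matrix.trace, Matrix.mul_apply, Rz, Matrix.of_apply, Fintype.sum_prod_type,
    Fintype.sum_bool, Matrix.diag]
  norm_num
  simp only [Complex.star_def] at hz
  linear_combination (1/32 : ℂ) * (hz false false + hz false true + hz true false + hz true true)

lemma trR3 (z : Bool → Bool → ℂ) (hz : ∀ t t', z t t' * star (z t t') = 1) :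
    ((Rz z) ^ 3).trace = 5/32 := by
  rw [pow_succ, pow_two]
  simp only [Matrix.trace, Matrix.mul_apply, Rz, Matrix.of_apply, Fintype.sum_prod_type,
    Fintype.sum_bool, Matrix.diag]
  norm_num
  simp only [Complex.star_def] at hz
  linear_combination (3/128 : ℂ) * (hz false false + hz false true + hz true false + hz true true)

lemma trR4_one : ((Rz fun _ _ => (1:ℂ)) ^ 4).trace = 9/128 := by
  rw [show (4:ℕ) = 2 + 2 from rfl, pow_add, pow_two]
  simp only [Matrix.trace, Matrix.mul_apply, Rz, Matrix.of_apply, Fintype.sum_prod_type,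
    Fintype.sum_bool, Matrix.diag, star_one]
  norm_num

-- eigenvalue power sums from traces
lemma my_conj_pow {n : Type*} [Fintype n] [DecidableEq n] (U D A : Matrix n n ℂ)
    (h : A = U * D * star U) (h1 : star U * U = 1) (k : ℕ) :
    A ^ k = U * D ^ k * star U := by
  induction k with
  | zero => simp [pow_zero, mul_eq_one_comm.mp h1]
  | succ m ih =>
    rw [pow_succ, ih, h, pow_succ]
    simp only [Matrix.mul_assoc]
    rw [← Matrix.mul_assoc (star U) U, h1, Matrix.one_mul]

lemma trace_pow {n : Type*} [Fintype n] [DecidableEq n] {A : Matrix n n ℂ} (hA : A.IsHermitian)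
    (k : ℕ) : (A ^ k).trace = ((∑ i, hA.eigenvalues i ^ k : ℝ) : ℂ) := by
  have hU1 : (star (hA.eigenvectorUnitary : Matrix n n ℂ)) *
      (hA.eigenvectorUnitary : Matrix n n ℂ) = 1 :=
    Matrix.mem_unitaryGroup_iff'.mp hA.eigenvectorUnitary.2
  rw [my_conj_pow (hA.eigenvectorUnitary : Matrix n n ℂ) _ _ hA.spectral_theorem hU1 k, Matrix.trace_mul_cycle, hU1,
    Matrix.one_mul, Matrix.diagonal_pow, Matrix.trace_diagonal]
  push_cast
  simp

-- analytic inequalities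
lemma log_taylor_ub (x : ℝ) (h0 : 0 ≤ x) (h1 : x < 1) :
    Real.log (1 - x) ≤ -(x + x^2/2 + x^3/3 + x^4/4 + x^5/5 + x^6/6 + x^7/7 + x^8/8)
      + x^9/(1-x) := by
  have h := Real.abs_log_sub_add_sum_range_le (x := x) (by rw [_root_.abs_of_nonneg h0]; exact h1) 8
  rw [_root_.abs_of_nonneg h0] at h
  simp [Finset.sum_range_succ] at h
  have h' := (abs_le.mp h).2
  nlinarith [h']

lemma log_taylor_ub' (x : ℝ) (h0 : 0 ≤ x) (h1 : x < 1) :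
    Real.log (1 + x) ≤ (x - x^2/2 + x^3/3 - x^4/4 + x^5/5 - x^6/6 + x^7/7 - x^8/8)
      + x^9/(1-x) := by
  have h := Real.abs_log_sub_add_sum_range_le (x := -x)
    (by rw [abs_neg, _root_.abs_of_nonneg h0]; exact h1) 8
  rw [abs_neg, _root_.abs_of_nonneg h0] at h
  simp [Finset.sum_range_succ] at h
  have h' := (abs_le.mp h).2
  nlinarith [h']

lemma regionB (s : ℝ) (hs0 : 0 < s) (hs4 : s ≤ 2/5) :
    (2-s) * Real.log (2-s) + s * Real.log s ≤ 2 * Real.log 2 * (1-s)^2 := by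
  have hL : (0.6931471803 : ℝ) < Real.log 2 := Real.log_two_gt_d9
  have hL1 : Real.log 2 < 1 := by have := Real.log_two_lt_d9; linarith
  have hlog1 : Real.log (2 - s) = Real.log 2 + Real.log (1 - s/2) := by
    rw [show (2 - s : ℝ) = 2 * (1 - s/2) by ring]
    rw [Real.log_mul (by norm_num) (by linarith)]
  have hb1 : Real.log (1 - s/2) ≤ -s/2 := by
    have := Real.log_le_sub_one_of_pos (show (0:ℝ) < 1 - s/2 by linarith)
    linarith
  have hb2 : Real.log s ≤ 4*s - 1 - 2*Real.log 2 := by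
    have h4s : Real.log (4*s) ≤ 4*s - 1 := Real.log_le_sub_one_of_pos (by linarith)
    rw [Real.log_mul (by norm_num) (ne_of_gt hs0)] at h4s
    have : Real.log 4 = 2 * Real.log 2 := by
      rw [show (4:ℝ) = 2^2 by norm_num, Real.log_pow]; push_cast; ring
    linarith
  rw [hlog1]
  have m1 : (2-s) * (Real.log 2 + Real.log (1 - s/2)) ≤ (2-s) * (Real.log 2 - s/2) :=
    mul_le_mul_of_nonneg_left (by linarith) (by linarith)
  have m2 : s * Real.log s ≤ s * (4*s - 1 - 2*Real.log 2) :=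
    mul_le_mul_of_nonneg_left hb2 (le_of_lt hs0)
  have inner : (Real.log 2 - 2) + (9/2 - 2*Real.log 2) * s ≤ 0 := by
    nlinarith [mul_le_mul_of_nonneg_left hs4 (show (0:ℝ) ≤ 9/2 - 2*Real.log 2 by linarith)]
  have key : s * ((Real.log 2 - 2) + (9/2 - 2*Real.log 2) * s) ≤ 0 :=
    mul_nonpos_of_nonneg_of_nonpos hs0.le inner
  have expand : (2-s)*(Real.log 2 - s/2) + s*(4*s-1-2*Real.log 2) - 2*Real.log 2*(1-s)^2 =
      s*((Real.log 2 - 2) + (9/2 - 2*Real.log 2)*s) := by ring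
  linarith [m1, m2, key, expand]

lemma G_bound (r : ℝ) (h0 : 0 ≤ r) (h1 : r < 1) :
    (1+r) * Real.log (1+r) + (1-r) * Real.log (1-r) ≤ 2 * Real.log 2 * r^2 := by
  have hL : (0.6931471803 : ℝ) < Real.log 2 := Real.log_two_gt_d9
  rcases le_or_gt r (3/5) with hr | hr
  · -- region A
    have hu := log_taylor_ub r h0 h1
    have hu' := log_taylor_ub' r h0 h1
    have hden : (0:ℝ) < 1 - r := by linarith
    have e9 : r^9/(1-r) ≤ 5/2 * r^9 := by
      rw [div_le_iff₀ hden]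
      nlinarith [pow_nonneg h0 9]
    have b1 : (1+r) * Real.log (1+r) ≤
        (1+r) * ((r - r^2/2 + r^3/3 - r^4/4 + r^5/5 - r^6/6 + r^7/7 - r^8/8) + 5/2*r^9) :=
      mul_le_mul_of_nonneg_left (le_trans hu' (by linarith)) (by linarith)
    have b2 : (1-r) * Real.log (1-r) ≤
        (1-r) * (-(r + r^2/2 + r^3/3 + r^4/4 + r^5/5 + r^6/6 + r^7/7 + r^8/8) + 5/2*r^9) :=
      mul_le_mul_of_nonneg_left (le_trans hu (by linarith)) (by linarith)
    have hsum : (1+r) * Real.log (1+r) + (1-r) * Real.log (1-r) ≤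
        r^2 + r^4/6 + r^6/15 + r^8/28 + 5*r^9 := by
      calc (1+r) * Real.log (1+r) + (1-r) * Real.log (1-r) ≤ _ + _ := add_le_add b1 b2
      _ = r^2 + r^4/6 + r^6/15 + r^8/28 + 5*r^9 := by ring
    refine le_trans hsum ?_
    nlinarith [pow_nonneg h0 2, pow_nonneg h0 4, pow_nonneg h0 6, pow_nonneg h0 8,
      pow_nonneg h0 9,
      mul_le_mul_of_nonneg_left (show r^2 ≤ 9/25 by nlinarith) (pow_nonneg h0 2),
      mul_le_mul_of_nonneg_left (show r^4 ≤ 81/625 by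
        have := pow_le_pow_left₀ h0 hr 4; norm_num at this; linarith) (pow_nonneg h0 2),
      mul_le_mul_of_nonneg_left (show r^6 ≤ 729/15625 by
        have := pow_le_pow_left₀ h0 hr 6; norm_num at this; linarith) (pow_nonneg h0 2),
      mul_le_mul_of_nonneg_left (show r^7 ≤ 2187/78125 by
        have := pow_le_pow_left₀ h0 hr 7; norm_num at this; linarith) (pow_nonneg h0 2)]
  · -- region B
    have h := regionB (1-r) (by linarith) (by linarith)
    have h2 : (2-(1-r):ℝ) = 1+r := by ring
    have h3 : (1-(1-r):ℝ) = r := by ring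
    rw [h2, h3] at h
    exact h

lemma keyF_aux (u : ℝ) (h0 : 0 ≤ u) (h16 : u^2 ≤ 1/16) :
    1 - 8*u^2 ≤ -((1/4+u) * Real.logb 2 (1/4+u) + (1/4-u) * Real.logb 2 (1/4-u)) := by
  have hL : (0:ℝ) < Real.log 2 := Real.log_pos (by norm_num)
  have hu4 : u ≤ 1/4 := by nlinarith
  rcases eq_or_lt_of_le hu4 with he | hlt
  · -- u = 1/4
    subst he
    have hlb : Real.logb 2 (1/4 + 1/4 : ℝ) = -1 := by
      rw [show (1/4 + 1/4 : ℝ) = 2⁻¹ by norm_num, Real.logb_inv,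
        Real.logb_self_eq_one (by norm_num)]
    rw [hlb]
    norm_num
  · have hrw : -((1/4+u) * Real.logb 2 (1/4+u) + (1/4-u) * Real.logb 2 (1/4-u)) =
        -((1/4+u) * Real.log (1/4+u) + (1/4-u) * Real.log (1/4-u)) / Real.log 2 := by
      simp only [Real.logb]; ring
    rw [hrw, le_div_iff₀ hL]
    have l1 : Real.log (1/4+u) = Real.log (1+4*u) - Real.log 4 := by
      rw [show (1/4+u : ℝ) = (1+4*u)/4 by ring, Real.log_div (by linarith) (by norm_num)]
    have l2 : Real.log (1/4-u) = Real.log (1-4*u) - Real.log 4 := by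
      rw [show (1/4-u : ℝ) = (1-4*u)/4 by ring, Real.log_div (by linarith) (by norm_num)]
    have l4 : Real.log 4 = 2 * Real.log 2 := by
      rw [show (4:ℝ) = 2^2 by norm_num, Real.log_pow]; push_cast; ring
    have hG := G_bound (4*u) (by linarith) (by linarith)
    rw [l1, l2, l4]
    nlinarith [hG]

lemma keyF (u : ℝ) (h16 : u^2 ≤ 1/16) :
    1 - 8*u^2 ≤ -((1/4+u) * Real.logb 2 (1/4+u) + (1/4-u) * Real.logb 2 (1/4-u)) := by
  rcases le_or_gt 0 u with h | h
  · exact keyF_aux u h h16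
  · have := keyF_aux (-u) (by linarith) (by rw [neg_pow]; simpa using h16)
    rw [show (1/4 + -u : ℝ) = 1/4 - u by ring, show (1/4 - -u : ℝ) = 1/4 + u by ring] at this
    rw [show ((-u)^2 : ℝ) = u^2 by ring] at this
    linarith

lemma pairing (a b c d : ℝ) (h1 : a+b+c+d = 0) (h3 : a^3+b^3+c^3+d^3 = 0) :
    (b = -a ∧ d = -c) ∨ (c = -a ∧ d = -b) ∨ (c = -b ∧ d = -a) := by
  have key : (a+b) * (c*d - a*b) = 0 := by
    linear_combination (1/3) * h3 - (1/3) * ((a+b)^2 - (a+b)*(c+d) + (c+d)^2 - 3*c*d) * h1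
  rcases mul_eq_zero.mp key with h | h
  · exact Or.inl ⟨by linarith, by linarith⟩
  · have hq : (c+a) * (c+b) = 0 := by linear_combination (-1) * h + c * h1
    rcases mul_eq_zero.mp hq with h' | h'
    · exact Or.inr (Or.inl ⟨by linarith, by linarith⟩)
    · exact Or.inr (Or.inr ⟨by linarith, by linarith⟩)

lemma pairE (a b : ℝ) (hb : b = 1/2 - a) (h16 : (a - 1/4)^2 ≤ 1/16) :
    1 - 8*(a-1/4)^2 ≤ -(a * Real.logb 2 a + b * Real.logb 2 b) := by
  have := keyF (a - 1/4) h16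
  rw [show (1/4 + (a - 1/4) : ℝ) = a by ring,
    show (1/4 - (a - 1/4) : ℝ) = 1/2 - a by ring] at this
  rw [hb]
  linarith

set_option maxHeartbeats 1000000 in
lemma entropy_lb (a b c d : ℝ)
    (h1 : a+b+c+d = 1) (h2 : a^2+b^2+c^2+d^2 = 3/8) (h3 : a^3+b^3+c^3+d^3 = 5/32) :
    3/2 ≤ -(a * Real.logb 2 a + b * Real.logb 2 b + c * Real.logb 2 c + d * Real.logb 2 d) := by
  have p1 : (a-1/4)+(b-1/4)+(c-1/4)+(d-1/4) = 0 := by linarith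
  have p3 : (a-1/4)^3+(b-1/4)^3+(c-1/4)^3+(d-1/4)^3 = 0 := by
    linear_combination h3 - (3/4) * h2 + (3/16) * h1
  have hsq : (a-1/4)^2+(b-1/4)^2+(c-1/4)^2+(d-1/4)^2 = 1/8 := by
    linear_combination h2 - (1/2) * h1
  rcases pairing _ _ _ _ p1 p3 with ⟨hb, hd⟩ | ⟨hc, hd⟩ | ⟨hc, hd⟩
  · have hb' : b = 1/2 - a := by linarith
    have hd' : d = 1/2 - c := by linarith
    have eb : (b-1/4)^2 = (a-1/4)^2 := by rw [hb']; ring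
    have ed : (d-1/4)^2 = (c-1/4)^2 := by rw [hd']; ring
    have huv : (a-1/4)^2 + (c-1/4)^2 = 1/16 := by linarith [hsq, eb, ed]
    have e1 := pairE a b hb' (by linarith [huv, sq_nonneg (c-1/4)])
    have e2 := pairE c d hd' (by linarith [huv, sq_nonneg (a-1/4)])
    linarith
  · have hc' : c = 1/2 - a := by linarith
    have hd' : d = 1/2 - b := by linarith
    have ec : (c-1/4)^2 = (a-1/4)^2 := by rw [hc']; ring
    have ed : (d-1/4)^2 = (b-1/4)^2 := by rw [hd']; ring
    have huv : (a-1/4)^2 + (b-1/4)^2 = 1/16 := by linarith [hsq, ec, ed]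
    have e1 := pairE a c hc' (by linarith [huv, sq_nonneg (b-1/4)])
    have e2 := pairE b d hd' (by linarith [huv, sq_nonneg (a-1/4)])
    linarith
  · have hc' : c = 1/2 - b := by linarith
    have hd' : d = 1/2 - a := by linarith
    have ec : (c-1/4)^2 = (b-1/4)^2 := by rw [hc']; ring
    have ed : (d-1/4)^2 = (a-1/4)^2 := by rw [hd']; ring
    have huv : (a-1/4)^2 + (b-1/4)^2 = 1/16 := by linarith [hsq, ec, ed]
    have e1 := pairE a d hd' (by linarith [huv, sq_nonneg (b-1/4)])
    have e2 := pairE b c hc' (by linarith [huv, sq_nonneg (a-1/4)])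
    linarith

lemma lb2 : Real.logb 2 (1/2 : ℝ) = -1 := by
  rw [show (1/2:ℝ) = 2⁻¹ by norm_num, Real.logb_inv, Real.logb_self_eq_one (by norm_num)]

lemma lb4 : Real.logb 2 (1/4 : ℝ) = -2 := by
  have hL : Real.log 2 ≠ 0 := ne_of_gt (Real.log_pos (by norm_num))
  rw [Real.logb, show (1/4:ℝ) = 4⁻¹ by norm_num, Real.log_inv, show (4:ℝ) = 2^2 by norm_num,
    Real.log_pow]
  push_cast
  field_simp

lemma pairE0 (a b : ℝ) (hb : b = 1/2 - a) (h : (a-1/4)^2 = 1/16) :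
    -(a * Real.logb 2 a + b * Real.logb 2 b) = 1/2 := by
  have hz : (a - 1/2) * a = 0 := by linear_combination h
  rcases mul_eq_zero.mp hz with h' | h'
  · have ha : a = 1/2 := by linarith
    subst ha
    rw [hb]
    norm_num [lb2]
  · subst h'
    rw [hb]
    norm_num [lb2]

lemma pairE1 (a b : ℝ) (hb : b = 1/2 - a) (h : (a-1/4)^2 = 0) :
    -(a * Real.logb 2 a + b * Real.logb 2 b) = 1 := by
  have ha : a = 1/4 := by
    have h0 : a - 1/4 = 0 := pow_eq_zero_iff (n := 2) (by norm_num) |>.mp h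
    linarith
  subst ha
  rw [hb]
  norm_num [lb4]

set_option maxHeartbeats 1000000 in
lemma entropy_eq (a b c d : ℝ)
    (h1 : a+b+c+d = 1) (h2 : a^2+b^2+c^2+d^2 = 3/8) (h3 : a^3+b^3+c^3+d^3 = 5/32)
    (h4 : a^4+b^4+c^4+d^4 = 9/128) :
    -(a * Real.logb 2 a + b * Real.logb 2 b + c * Real.logb 2 c + d * Real.logb 2 d) = 3/2 := by
  have p1 : (a-1/4)+(b-1/4)+(c-1/4)+(d-1/4) = 0 := by linarith
  have p3 : (a-1/4)^3+(b-1/4)^3+(c-1/4)^3+(d-1/4)^3 = 0 := by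
    linear_combination h3 - (3/4) * h2 + (3/16) * h1
  rcases pairing _ _ _ _ p1 p3 with ⟨hb, hd⟩ | ⟨hc, hd⟩ | ⟨hc, hd⟩
  · have hb' : b = 1/2 - a := by linarith
    have hd' : d = 1/2 - c := by linarith
    subst hb'; subst hd'
    have huv : (a-1/4)^2 + (c-1/4)^2 = 1/16 := by linear_combination (1/2)*h2
    have hq : ((a-1/4)^2)^2 + ((c-1/4)^2)^2 = 1/256 := by
      linear_combination (1/2)*h4 - (3/8)*huv
    have hAC : (a-1/4)^2 * ((c-1/4)^2) = 0 := by
      linear_combination (1/2)*((a-1/4)^2+(c-1/4)^2+1/16)*huv - (1/2)*hq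
    rcases mul_eq_zero.mp hAC with h | h
    · have e1 := pairE1 a (1/2-a) rfl h
      have e2 := pairE0 c (1/2-c) rfl (by linarith)
      linarith
    · have e1 := pairE0 a (1/2-a) rfl (by linarith)
      have e2 := pairE1 c (1/2-c) rfl h
      linarith
  · have hc' : c = 1/2 - a := by linarith
    have hd' : d = 1/2 - b := by linarith
    subst hc'; subst hd'
    have huv : (a-1/4)^2 + (b-1/4)^2 = 1/16 := by linear_combination (1/2)*h2
    have hq : ((a-1/4)^2)^2 + ((b-1/4)^2)^2 = 1/256 := by
      linear_combination (1/2)*h4 - (3/8)*huv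
    have hAC : (a-1/4)^2 * ((b-1/4)^2) = 0 := by
      linear_combination (1/2)*((a-1/4)^2+(b-1/4)^2+1/16)*huv - (1/2)*hq
    rcases mul_eq_zero.mp hAC with h | h
    · have e1 := pairE1 a (1/2-a) rfl h
      have e2 := pairE0 b (1/2-b) rfl (by linarith)
      linarith
    · have e1 := pairE0 a (1/2-a) rfl (by linarith)
      have e2 := pairE1 b (1/2-b) rfl h
      linarith
  · have hc' : c = 1/2 - b := by linarith
    have hd' : d = 1/2 - a := by linarith
    subst hc'; subst hd'
    have huv : (a-1/4)^2 + (b-1/4)^2 = 1/16 := by linear_combination (1/2)*h2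
    have hq : ((a-1/4)^2)^2 + ((b-1/4)^2)^2 = 1/256 := by
      linear_combination (1/2)*h4 - (3/8)*huv
    have hAC : (a-1/4)^2 * ((b-1/4)^2) = 0 := by
      linear_combination (1/2)*((a-1/4)^2+(b-1/4)^2+1/16)*huv - (1/2)*hq
    rcases mul_eq_zero.mp hAC with h | h
    · have e1 := pairE1 a (1/2-a) rfl h
      have e2 := pairE0 b (1/2-b) rfl (by linarith)
      linarith
    · have e1 := pairE0 a (1/2-a) rfl (by linarith)
      have e2 := pairE1 b (1/2-b) rfl h
      linarith

lemma mutualInfo_POT : mutualInfo POT = 1 := by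
  have h2 : Real.logb 2 (2:ℝ) = 1 := Real.logb_self_eq_one (by norm_num)
  simp only [mutualInfo, margX, margY, POT, Fintype.sum_prod_type, Fintype.sum_bool]
  norm_num [h2]

-- power sums of the eigenvalues of rhoB POT θ
lemma eig_pow_sum (θ : (Bool × Bool) × (Bool × Bool) → ℝ)
    (hH : (rhoB POT θ).IsHermitian) :
    (∑ i, hH.eigenvalues i) = 1 ∧ (∑ i, hH.eigenvalues i ^ 2) = 3/8 ∧
      (∑ i, hH.eigenvalues i ^ 3) = 5/32 := by
  have T1 : (rhoB POT θ).trace = 1 := by rw [rhoB_POT_eq]; exact trR1 _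
  have T2 : ((rhoB POT θ) ^ 2).trace = 3/8 := by rw [rhoB_POT_eq]; exact trR2 _ (zfun_unit θ)
  have T3 : ((rhoB POT θ) ^ 3).trace = 5/32 := by rw [rhoB_POT_eq]; exact trR3 _ (zfun_unit θ)
  refine ⟨?_, ?_, ?_⟩
  · have e : ((∑ i, hH.eigenvalues i ^ 1 : ℝ) : ℂ) = ((1 : ℝ) : ℂ) := by
      rw [← trace_pow hH 1, pow_one, T1]; norm_num
    have := Complex.ofReal_inj.mp e
    simpa using this
  · have e : ((∑ i, hH.eigenvalues i ^ 2 : ℝ) : ℂ) = ((3/8 : ℝ) : ℂ) := by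
      rw [← trace_pow hH 2, T2]; norm_num
    exact Complex.ofReal_inj.mp e
  · have e : ((∑ i, hH.eigenvalues i ^ 3 : ℝ) : ℂ) = ((5/32 : ℝ) : ℂ) := by
      rw [← trace_pow hH 3, T3]; norm_num
    exact Complex.ofReal_inj.mp e

lemma vNE_eq_s9 {n : Type*} [Fintype n] [DecidableEq n] {ρ : Matrix n n ℂ} (h : ρ.IsHermitian) :
    vNE ρ = -∑ i, h.eigenvalues i * Real.logb 2 (h.eigenvalues i) := by
  rw [vNE, dif_pos h]
  congr!

lemma vNE_rhoB_ge (θ : (Bool × Bool) × (Bool × Bool) → ℝ) : 3/2 ≤ vNE (rhoB POT θ) := by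
  have hH : (rhoB POT θ).IsHermitian := (rhoB_posSemidef POT θ).isHermitian
  obtain ⟨r1, r2, r3⟩ := eig_pow_sum θ hH
  rw [vNE_eq_s9 hH]
  simp only [Fintype.sum_prod_type, Fintype.sum_bool] at r1 r2 r3 ⊢
  have := entropy_lb (hH.eigenvalues (true, true)) (hH.eigenvalues (true, false))
    (hH.eigenvalues (false, true)) (hH.eigenvalues (false, false))
    (by linarith) (by linarith) (by linarith)
  linarith

lemma vNE_rhoB_zero : vNE (rhoB POT fun _ => 0) = 3/2 := by
  have hH : (rhoB POT fun _ => 0).IsHermitian := (rhoB_posSemidef POT _).isHermitian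
  obtain ⟨r1, r2, r3⟩ := eig_pow_sum (fun _ => 0) hH
  have T4 : ((rhoB POT fun _ => 0) ^ 4).trace = 9/128 := by
    rw [rhoB_POT_eq, zfun_zero]; exact trR4_one
  have r4 : (∑ i, hH.eigenvalues i ^ 4) = 9/128 := by
    have e : ((∑ i, hH.eigenvalues i ^ 4 : ℝ) : ℂ) = ((9/128 : ℝ) : ℂ) := by
      rw [← trace_pow hH 4, T4]; norm_num
    exact Complex.ofReal_inj.mp e
  rw [vNE_eq_s9 hH]
  simp only [Fintype.sum_prod_type, Fintype.sum_bool] at r1 r2 r3 r4 ⊢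
  have := entropy_eq (hH.eigenvalues (true, true)) (hH.eigenvalues (true, false))
    (hH.eigenvalues (false, true)) (hH.eigenvalues (false, false))
    (by linarith) (by linarith) (by linarith) (by linarith)
  linarith

end LeakageAux

/-- **Leakage of randomized 1-out-of-2 OT.** Every regular embedding `ψ_θ`
of `P^{OT}` satisfies `S(ρ_B(θ)) ≥ 3/2`, and hence `Δ(ψ_θ) ≥ 1/2` (note `I(X;Y) = 1`);
moreover the canonical embedding `θ ≡ 0` attains equality. -/
theorem leakage_POT :
    mutualInfo POT = 1 ∧
    (∀ θ : (Bool × Bool) × (Bool × Bool) → ℝ, 3 / 2 ≤ vNE (rhoB POT θ)) ∧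
    (∀ θ : (Bool × Bool) × (Bool × Bool) → ℝ, 1 / 2 ≤ leakReg POT θ) ∧
    vNE (rhoB POT fun _ => 0) = 3 / 2 ∧
    leakReg POT (fun _ => 0) = 1 / 2 := by
  refine ⟨mutualInfo_POT, vNE_rhoB_ge, ?_, vNE_rhoB_zero, ?_⟩
  · intro θ
    have := vNE_rhoB_ge θ
    simp only [leakReg, mutualInfo_POT]
    linarith
  · simp only [leakReg, mutualInfo_POT, vNE_rhoB_zero]
    norm_num
end
end
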